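/- arXiv:math/0306008 — 9 statements merged into one kernel-verified Lean document; each statement's English description precedes it below -/
import Mathlib

section
/- Euler's constant equals γ = ∫_1^∞ Σ_{n=1}^∞ 1/((t+n-1)^2(t+n)) dt. -/
open Real MeasureTheory Set Filter Finset
open scoped Topology

private lemma key_integral (c : ℝ) (hc : 1 ≤ c) :
    ∫ t in Set.Ioi (1:ℝ), 1 / ((t + c - 1) ^ 2 * (t + c)) =
      1 / c - (Real.log (c + 1) - Real.log c) ∧
    IntegrableOn (fun t => 1 / ((t + c - 1) ^ 2 * (t + c))) (Set.Ioi (1:ℝ)) := by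
  set g : ℝ → ℝ := fun t => Real.log (t + c) - Real.log (t + c - 1) - (t + c - 1)⁻¹ with hg
  set g' : ℝ → ℝ := fun t => 1 / ((t + c - 1) ^ 2 * (t + c)) with hg'
  have hderiv : ∀ x ∈ Set.Ici (1:ℝ), HasDerivAt g (g' x) x := by
    intro x hx
    have hx1 : (1:ℝ) ≤ x := hx
    have h1 : (0:ℝ) < x + c - 1 := by linarith
    have h2 : (0:ℝ) < x + c := by linarith
    have d1 : HasDerivAt (fun t : ℝ => t + c) 1 x := (hasDerivAt_id x).add_const c
    have d2 : HasDerivAt (fun t : ℝ => t + c - 1) 1 x := d1.sub_const 1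
    have dlog1 : HasDerivAt (fun t : ℝ => Real.log (t + c)) ((x + c)⁻¹) x := by
      simpa [Function.comp_def] using (Real.hasDerivAt_log h2.ne').comp x d1
    have dlog2 : HasDerivAt (fun t : ℝ => Real.log (t + c - 1)) ((x + c - 1)⁻¹) x := by
      simpa [Function.comp_def] using (Real.hasDerivAt_log h1.ne').comp x d2
    have dinv : HasDerivAt (fun t : ℝ => (t + c - 1)⁻¹) (-1 / (x + c - 1) ^ 2) x := by
      simpa [Pi.inv_def] using d2.inv h1.ne'
    have := (dlog1.sub dlog2).sub dinv
    convert this using 1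
    · rfl
    · rfl
    · rfl
    rw [hg']
    field_simp
    ring
  have g'pos : ∀ x ∈ Set.Ioi (1:ℝ), 0 ≤ g' x := by
    intro x hx
    have hx1 : (1:ℝ) < x := hx
    have h1 : (0:ℝ) < x + c - 1 := by linarith
    have h2 : (0:ℝ) < x + c := by linarith
    positivity
  have htend : Tendsto g atTop (𝓝 0) := by
    have hA : Tendsto (fun t : ℝ => (t + c - 1)⁻¹) atTop (𝓝 0) := by
      apply tendsto_inv_atTop_zero.comp
      exact (tendsto_atTop_add_const_right atTop (c - 1) tendsto_id).congr fun t => by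
        simp only [id_eq]; ring
    have hB : Tendsto (fun t : ℝ => Real.log (t + c) - Real.log (t + c - 1)) atTop (𝓝 0) := by
      have h1 : Tendsto (fun t : ℝ => 1 + (t + c - 1)⁻¹) atTop (𝓝 1) := by
        simpa using tendsto_const_nhds.add hA
      have h2 : Tendsto (fun t : ℝ => Real.log (1 + (t + c - 1)⁻¹)) atTop (𝓝 0) := by
        have := (Real.continuousAt_log (x := 1) one_ne_zero).tendsto.comp h1
        simpa [Function.comp_def] using this
      apply h2.congr'
      filter_upwards [eventually_gt_atTop (1:ℝ)] with t ht
      have hp : (0:ℝ) < t + c - 1 := by linarith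
      have hp2 : (0:ℝ) < t + c := by linarith
      rw [← Real.log_div hp2.ne' hp.ne']
      congr 1
      field_simp
      ring
    have := hB.sub hA
    simpa using this
  have hint : IntegrableOn g' (Set.Ioi (1:ℝ)) :=
    integrableOn_Ioi_deriv_of_nonneg' hderiv g'pos htend
  refine ⟨?_, hint⟩
  have := integral_Ioi_of_hasDerivAt_of_nonneg' hderiv g'pos htend
  rw [this, hg]
  have hc0 : (0:ℝ) < c := by linarith
  have hc1 : (0:ℝ) < c + 1 := by linarith
  simp only []
  rw [show (1:ℝ) + c - 1 = c by ring, show (1:ℝ) + c = c + 1 by ring]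
  ring

private lemma key_sum :
    HasSum (fun n : ℕ+ => 1 / (n:ℝ) - (Real.log ((n:ℝ) + 1) - Real.log (n:ℝ)))
      Real.eulerMascheroniConstant := by
  have hnat : HasSum (fun k : ℕ => 1 / ((k:ℝ) + 1)
      - (Real.log ((k:ℝ) + 2) - Real.log ((k:ℝ) + 1))) Real.eulerMascheroniConstant := by
    rw [hasSum_iff_tendsto_nat_of_nonneg]
    · have hsum : ∀ N : ℕ, ∑ k ∈ Finset.range N,
          (1 / ((k:ℝ) + 1) - (Real.log ((k:ℝ) + 2) - Real.log ((k:ℝ) + 1)))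
          = Real.eulerMascheroniSeq N := by
        intro N
        rw [Finset.sum_sub_distrib]
        have h1 : ∑ k ∈ Finset.range N, (1 / ((k:ℝ) + 1)) = (harmonic N : ℝ) := by
          rw [harmonic]
          push_cast
          simp [one_div]
        have h2 : ∑ k ∈ Finset.range N, (Real.log ((k:ℝ) + 2) - Real.log ((k:ℝ) + 1))
            = Real.log ((N:ℝ) + 1) := by
          have := Finset.sum_range_sub (f := fun k : ℕ => Real.log ((k:ℝ) + 1)) N
          simp only [Nat.cast_zero, zero_add, Real.log_one, sub_zero] at this
          rw [← this]
          apply Finset.sum_congr rfl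
          intro k _
          push_cast
          ring_nf
        rw [h1, h2, Real.eulerMascheroniSeq]
      simp only [hsum]
      exact Real.tendsto_eulerMascheroniSeq
    · intro k
      have hp : (0:ℝ) < (k:ℝ) + 1 := by positivity
      have hp2 : (0:ℝ) < (k:ℝ) + 2 := by positivity
      have hlog : Real.log ((k:ℝ) + 2) - Real.log ((k:ℝ) + 1)
          = Real.log (((k:ℝ) + 2) / ((k:ℝ) + 1)) := (Real.log_div hp2.ne' hp.ne').symm
      rw [hlog]
      have hle : Real.log (((k:ℝ) + 2) / ((k:ℝ) + 1)) ≤ ((k:ℝ) + 2) / ((k:ℝ) + 1) - 1 :=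
        Real.log_le_sub_one_of_pos (by positivity)
      have heq : ((k:ℝ) + 2) / ((k:ℝ) + 1) - 1 = 1 / ((k:ℝ) + 1) := by field_simp; norm_num
      rw [heq] at hle
      linarith
  have he := (Equiv.pnatEquivNat.symm.hasSum_iff
    (f := fun n : ℕ+ => 1 / (n:ℝ) - (Real.log ((n:ℝ) + 1) - Real.log (n:ℝ)))
    (a := Real.eulerMascheroniConstant)).mp ?_
  · exact he
  · convert hnat using 1
    funext k
    have : ((Equiv.pnatEquivNat.symm k : ℕ+) : ℝ) = (k:ℝ) + 1 := by
      simp [Equiv.pnatEquivNat, Nat.succPNat]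
    simp only [Function.comp_apply, this]
    ring_nf

theorem stmt3 :
    Real.eulerMascheroniConstant =
      ∫ t in Set.Ioi (1 : ℝ), ∑' n : ℕ+, 1 / ((t + n - 1) ^ 2 * (t + n)) := by
  have hkey : ∀ n : ℕ+, (∫ t in Set.Ioi (1:ℝ), 1 / ((t + (n:ℝ) - 1) ^ 2 * (t + (n:ℝ))) =
      1 / (n:ℝ) - (Real.log ((n:ℝ) + 1) - Real.log (n:ℝ))) ∧
      IntegrableOn (fun t => 1 / ((t + (n:ℝ) - 1) ^ 2 * (t + (n:ℝ)))) (Set.Ioi (1:ℝ)) := by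
    intro n
    have hc : (1:ℝ) ≤ (n:ℝ) := by exact_mod_cast n.one_le
    exact key_integral (n:ℝ) hc
  rw [← MeasureTheory.integral_tsum_of_summable_integral_norm
    (F := fun (n : ℕ+) (t : ℝ) => 1 / ((t + (n:ℝ) - 1) ^ 2 * (t + (n:ℝ))))
    (fun n => (hkey n).2) ?_]
  · rw [← key_sum.tsum_eq]
    exact tsum_congr fun n => ((hkey n).1).symm
  · apply Summable.congr key_sum.summable.abs
    intro n
    have hnorm : ∫ t in Set.Ioi (1:ℝ), ‖1 / ((t + (n:ℝ) - 1) ^ 2 * (t + (n:ℝ)))‖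
        = ∫ t in Set.Ioi (1:ℝ), 1 / ((t + (n:ℝ) - 1) ^ 2 * (t + (n:ℝ))) := by
      apply MeasureTheory.setIntegral_congr_fun measurableSet_Ioi
      intro t ht
      have hc : (1:ℝ) ≤ (n:ℝ) := by exact_mod_cast n.one_le
      have h1 : (0:ℝ) < t + (n:ℝ) - 1 := by simp only [Set.mem_Ioi] at ht; linarith
      have h2 : (0:ℝ) < t + (n:ℝ) := by linarith
      exact Real.norm_of_nonneg (by positivity)
    rw [hnorm, (hkey n).1]
    rw [abs_of_nonneg]
    have hp : (0:ℝ) < (n:ℝ) := by exact_mod_cast n.pos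
    have hp2 : (0:ℝ) < (n:ℝ) + 1 := by positivity
    have hlog : Real.log ((n:ℝ) + 1) - Real.log (n:ℝ)
        = Real.log (((n:ℝ) + 1) / (n:ℝ)) := (Real.log_div hp2.ne' hp.ne').symm
    rw [hlog]
    have hle : Real.log (((n:ℝ) + 1) / (n:ℝ)) ≤ ((n:ℝ) + 1) / (n:ℝ) - 1 :=
      Real.log_le_sub_one_of_pos (by positivity)
    have heq : ((n:ℝ) + 1) / (n:ℝ) - 1 = 1 / (n:ℝ) := by field_simp; ring
    rw [heq] at hle
    linarith
end

section
/- Euler's constant satisfies the key formula γ = ∫_1^∞ Σ_{n=1}^∞ n!/((n+1)·t(t+1)···(t+n)) dt. -/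
open MeasureTheory Real Set Filter Topology

lemma prod_pos_aux {t : ℝ} (ht : 0 < t) (n : ℕ) :
    0 < ∏ k ∈ Finset.range n, (t + (k : ℝ)) :=
  Finset.prod_pos fun k _ => by positivity

lemma beta_eval : ∀ (n : ℕ) (t : ℝ), 0 < t →
    ∫ x in (0:ℝ)..1, x ^ (t - 1) * (1 - x) ^ n
      = (n.factorial : ℝ) / ∏ k ∈ Finset.range (n + 1), (t + (k : ℝ)) := by
  intro n
  induction n with
  | zero =>
    intro t ht
    simp only [pow_zero, mul_one, Nat.factorial_zero, Finset.range_one, Finset.prod_singleton,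
      Nat.cast_zero, add_zero, Nat.cast_one]
    rw [integral_rpow (Or.inl (by linarith))]
    rw [Real.one_rpow, Real.zero_rpow (by linarith), sub_add_cancel]
    norm_num
  | succ n ih =>
    intro t ht
    -- key: derivative of x^t * (1-x)^(n+1)
    have key : ∫ x in (0:ℝ)..1,
        (t * x ^ (t - 1) * (1 - x) ^ (n + 1) - (n + 1 : ℝ) * (x ^ t * (1 - x) ^ n)) = 0 := by
      have h := intervalIntegral.integral_eq_sub_of_hasDerivAt_of_le (a := (0:ℝ)) (b := 1)
        (f := fun x => x ^ t * (1 - x) ^ (n + 1))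
        (f' := fun x => t * x ^ (t - 1) * (1 - x) ^ (n + 1) - (n + 1 : ℝ) * (x ^ t * (1 - x) ^ n))
        (by norm_num)
        ?_ ?_ ?_
      · rw [h]
        simp [Real.zero_rpow ht.ne']
      · -- continuity
        apply ContinuousOn.mul
        · exact fun x _ => (Real.continuousAt_rpow_const x t (Or.inr ht.le)).continuousWithinAt
        · fun_prop
      · intro x hx
        have h1 : HasDerivAt (fun y : ℝ => y ^ t) (t * x ^ (t - 1)) x :=
          Real.hasDerivAt_rpow_const (Or.inl hx.1.ne')
        have h2 : HasDerivAt (fun y : ℝ => (1 - y) ^ (n + 1))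
            (-((n + 1 : ℝ) * (1 - x) ^ n)) x := by
          have := ((hasDerivAt_pow (n + 1) (1 - x)).comp x
            ((hasDerivAt_id x).const_sub 1))
          simpa [Function.comp_def, mul_comm, mul_assoc, mul_left_comm] using this
        have := h1.mul h2
        exact this.congr_deriv (by push_cast; ring)
      · -- interval integrability of f'
        apply IntervalIntegrable.sub
        · have hint : IntervalIntegrable (fun x : ℝ => x ^ (t - 1)) volume 0 1 :=
            intervalIntegral.intervalIntegrable_rpow' (by linarith)
          have := (hint.const_mul t).mul_continuousOn (g := fun x => (1 - x) ^ (n + 1)) (by fun_prop)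
          simpa [mul_assoc] using this
        · apply ContinuousOn.intervalIntegrable
          exact continuousOn_const.mul (ContinuousOn.mul
            (fun x _ => (Real.continuousAt_rpow_const x t (Or.inr ht.le)).continuousWithinAt)
            (Continuous.continuousOn (by fun_prop)))
    have e1 : ∫ x in (0:ℝ)..1, x ^ t * (1 - x) ^ n
        = (n.factorial : ℝ) / ∏ k ∈ Finset.range (n + 1), (t + 1 + (k : ℝ)) := by
      have := ih (t + 1) (by linarith)
      simpa using this
    have hi1 : IntervalIntegrable (fun x : ℝ => x ^ (t-1) * (1-x)^(n+1)) volume 0 1 := by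
      have hint : IntervalIntegrable (fun x : ℝ => x ^ (t - 1)) volume 0 1 :=
        intervalIntegral.intervalIntegrable_rpow' (by linarith)
      exact hint.mul_continuousOn (Continuous.continuousOn (by fun_prop))
    have hi2 : IntervalIntegrable (fun x : ℝ => x ^ t * (1-x)^n) volume 0 1 := by
      apply ContinuousOn.intervalIntegrable
      exact ContinuousOn.mul
        (fun x _ => (Real.continuousAt_rpow_const x t (Or.inr ht.le)).continuousWithinAt)
        (Continuous.continuousOn (by fun_prop))
    simp_rw [mul_assoc] at key
    rw [intervalIntegral.integral_sub (hi1.const_mul t) (hi2.const_mul _),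
      intervalIntegral.integral_const_mul, intervalIntegral.integral_const_mul,
      sub_eq_zero] at key
    have hP : (0:ℝ) < ∏ k ∈ Finset.range (n+1), (t + 1 + (k:ℝ)) :=
      Finset.prod_pos fun k _ => by positivity
    have hprod : ∏ k ∈ Finset.range (n+2), (t + (k:ℝ))
        = (∏ k ∈ Finset.range (n+1), (t + 1 + (k:ℝ))) * t := by
      rw [Finset.prod_range_succ']
      congr 1
      · exact Finset.prod_congr rfl fun k _ => by push_cast; ring
      · norm_num
    have goal1 : ∫ x in (0:ℝ)..1, x ^ (t-1) * (1-x)^(n+1)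
        = ((n:ℝ)+1) * ((n.factorial : ℝ) / ∏ k ∈ Finset.range (n+1), (t + 1 + (k:ℝ))) / t := by
      rw [← e1, ← key]
      field_simp
    rw [goal1, hprod, Nat.factorial_succ]
    push_cast
    field_simp

lemma contOn_rpow_neg_log {a : ℝ} (ha : 0 < a) :
    ContinuousOn (fun x : ℝ => x ^ a * (-Real.log x)) (Icc 0 1) := by
  intro x hx
  rcases eq_or_lt_of_le hx.1 with h0 | h0
  · subst h0
    apply ContinuousWithinAt.mono _ (Icc_subset_Ici_self : Icc (0:ℝ) 1 ⊆ Ici 0)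
    rw [← continuousWithinAt_Ioi_iff_Ici]
    unfold ContinuousWithinAt
    have hval : (fun x : ℝ => x ^ a * (-Real.log x)) 0 = 0 := by
      simp [Real.zero_rpow ha.ne']
    rw [hval]
    have h := (tendsto_log_mul_rpow_nhdsGT_zero ha).neg
    rw [neg_zero] at h
    apply h.congr
    intro x
    ring
  · exact ((Real.continuousAt_rpow_const x a (Or.inl h0.ne')).mul
      ((Real.continuousAt_log h0.ne').neg)).continuousWithinAt

lemma int_rpow_neg_log {s : ℝ} (hs : 1 < s) :
    ∫ x in (0:ℝ)..1, x ^ (s - 1) * (-Real.log x) = 1 / s ^ 2 := by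
  have hs0 : (0:ℝ) < s := by linarith
  set F : ℝ → ℝ := fun x => x ^ s / s ^ 2 - x ^ s * Real.log x / s with hF
  have hderiv : ∀ x ∈ Ioo (0:ℝ) 1, HasDerivAt F (x ^ (s - 1) * (-Real.log x)) x := by
    intro x hx
    have hx0 : x ≠ 0 := hx.1.ne'
    have h1 : HasDerivAt (fun y : ℝ => y ^ s) (s * x ^ (s - 1)) x :=
      Real.hasDerivAt_rpow_const (Or.inl hx0)
    have h2 : HasDerivAt (fun y : ℝ => y ^ s * Real.log y)
        (s * x ^ (s - 1) * Real.log x + x ^ s * x⁻¹) x :=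
      h1.mul (Real.hasDerivAt_log hx0)
    have h3 : x ^ s * x⁻¹ = x ^ (s - 1) := by
      rw [Real.rpow_sub hx.1, Real.rpow_one, div_eq_mul_inv]
    rw [h3] at h2
    have := (h1.div_const (s ^ 2)).sub (h2.div_const s)
    exact this.congr_deriv (by field_simp; ring)
  have hcont : ContinuousOn F (Icc 0 1) := by
    have h1 : ContinuousOn (fun x : ℝ => x ^ s) (Icc 0 1) :=
      fun x _ => (Real.continuousAt_rpow_const x s (Or.inr hs0.le)).continuousWithinAt
    have h2 : ContinuousOn (fun x : ℝ => x ^ s * Real.log x) (Icc 0 1) := by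
      have := (contOn_rpow_neg_log (a := s) hs0).neg
      apply this.congr
      intro x _
      simp only [Pi.neg_apply]
      ring
    exact (h1.div_const _).sub (h2.div_const _)
  have hint : IntervalIntegrable (fun x : ℝ => x ^ (s - 1) * (-Real.log x)) volume 0 1 := by
    apply ContinuousOn.intervalIntegrable
    rw [Set.uIcc_of_le (by norm_num)]
    exact contOn_rpow_neg_log (by linarith)
  have := intervalIntegral.integral_eq_sub_of_hasDeriv_right_of_le (by norm_num) hcont
    (fun x hx => (hderiv x hx).hasDerivWithinAt) hint
  rw [this, hF]
  simp [Real.zero_rpow hs0.ne']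

lemma summable_aux {c : ℕ → ℝ} (h0 : ∀ n, 0 ≤ c n) (h1 : ∀ n, c n ≤ 1 / ((n : ℝ) + 1) ^ 2) :
    Summable c := by
  apply Summable.of_nonneg_of_le h0 h1
  have h2 : Summable (fun n : ℕ => 1 / (n : ℝ) ^ 2) :=
    summable_one_div_nat_pow.mpr one_lt_two
  have h3 := (summable_nat_add_iff 1).mpr h2
  apply h3.congr
  intro n
  push_cast
  ring

lemma T_nonneg {t : ℝ} (ht : 0 < t) (n : ℕ) :
    0 ≤ (n.factorial : ℝ) / (((n : ℝ) + 1) * ∏ k ∈ Finset.range (n + 1), (t + (k : ℝ))) := by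
  have := prod_pos_aux ht (n + 1)
  positivity

lemma T_le {t : ℝ} (ht : 1 < t) (n : ℕ) :
    (n.factorial : ℝ) / (((n : ℝ) + 1) * ∏ k ∈ Finset.range (n + 1), (t + (k : ℝ)))
      ≤ 1 / ((n : ℝ) + 1) ^ 2 := by
  have hP : ((n + 1).factorial : ℝ) ≤ ∏ k ∈ Finset.range (n + 1), (t + (k : ℝ)) := by
    rw [← Finset.prod_range_add_one_eq_factorial]
    push_cast
    apply Finset.prod_le_prod
    · intro k _; positivity
    · intro k _; linarith
  have hP0 : (0:ℝ) < ((n + 1).factorial : ℝ) := by positivity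
  have h1 : (n.factorial : ℝ) / (((n : ℝ) + 1) * ∏ k ∈ Finset.range (n + 1), (t + (k : ℝ)))
      ≤ (n.factorial : ℝ) / (((n : ℝ) + 1) * ((n + 1).factorial : ℝ)) := by
    apply div_le_div_of_nonneg_left (by positivity) (by positivity)
    apply mul_le_mul_of_nonneg_left hP (by positivity)
  apply h1.trans
  rw [Nat.factorial_succ]
  push_cast
  apply le_of_eq
  have hf0 : (0:ℝ) < (n.factorial : ℝ) := by positivity
  field_simp

lemma E1 {t : ℝ} (ht : 1 < t) :
    ∑' n : ℕ, ((n.factorial : ℝ) / (((n : ℝ) + 1) * ∏ k ∈ Finset.range (n + 1), (t + (k : ℝ))))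
      = ∫ x in Ioo (0:ℝ) 1, x ^ (t - 1) * (-Real.log x) / (1 - x) := by
  have ht0 : (0:ℝ) < t := by linarith
  set f : ℕ → ℝ → ℝ := fun n x => x ^ (t - 1) * ((1 - x) ^ n * ((n : ℝ) + 1)⁻¹) with hf
  have hcf : ∀ n, Continuous (f n) := by
    intro n
    apply Continuous.mul ?_ (by fun_prop)
    rw [continuous_iff_continuousAt]
    exact fun x => Real.continuousAt_rpow_const x _ (Or.inr (by linarith))
  have hInt : ∀ n, IntegrableOn (f n) (Ioo (0:ℝ) 1) := fun n =>
    ((hcf n).integrableOn_Icc (a := 0) (b := 1)).mono_set Ioo_subset_Icc_self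
  have hnn : ∀ n, ∀ x ∈ Ioo (0:ℝ) 1, 0 ≤ f n x := by
    intro n x hx
    have h1 : (0:ℝ) ≤ x ^ (t - 1) := Real.rpow_nonneg hx.1.le _
    have h2 : (0:ℝ) ≤ 1 - x := by linarith [hx.2]
    positivity
  have hfint : ∀ n, ∫ x in Ioo (0:ℝ) 1, f n x
      = (n.factorial : ℝ) / (((n : ℝ) + 1) * ∏ k ∈ Finset.range (n + 1), (t + (k : ℝ))) := by
    intro n
    rw [← integral_Ioc_eq_integral_Ioo, ← intervalIntegral.integral_of_le zero_le_one]
    have e : ∀ x : ℝ, f n x = (x ^ (t - 1) * (1 - x) ^ n) * ((n : ℝ) + 1)⁻¹ := fun x => by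
      rw [hf]; ring
    simp_rw [e]
    rw [intervalIntegral.integral_mul_const, beta_eval n t ht0]
    have hP := prod_pos_aux ht0 (n + 1)
    have hn1 : ((n : ℝ) + 1) ≠ 0 := by positivity
    field_simp
  have hsummable : Summable (fun n : ℕ =>
      (n.factorial : ℝ) / (((n : ℝ) + 1) * ∏ k ∈ Finset.range (n + 1), (t + (k : ℝ)))) :=
    summable_aux (T_nonneg ht0) (T_le ht)
  have hlin : ∀ n : ℕ, ∫⁻ x, ‖f n x‖ₑ ∂(volume.restrict (Ioo (0:ℝ) 1))
      = ENNReal.ofReal ((n.factorial : ℝ) /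
        (((n : ℝ) + 1) * ∏ k ∈ Finset.range (n + 1), (t + (k : ℝ)))) := by
    intro n
    rw [← hfint n, ofReal_integral_eq_lintegral_ofReal (hInt n)
      ((ae_restrict_iff' measurableSet_Ioo).2 (Eventually.of_forall (hnn n)))]
    apply lintegral_congr_ae
    filter_upwards [(ae_restrict_iff' measurableSet_Ioo).2 (Eventually.of_forall (hnn n))]
      with x hx
    exact Real.enorm_eq_ofReal hx
  have hswap := MeasureTheory.integral_tsum (μ := volume.restrict (Ioo (0:ℝ) 1))
    (f := f) (fun n => (hcf n).aestronglyMeasurable) ?_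
  · rw [← funext hfint] at *
    rw [← hswap]
    apply setIntegral_congr_fun measurableSet_Ioo
    intro x hx
    have hx2 : (0:ℝ) < 1 - x := by linarith [hx.2]
    have hx1 : |1 - x| < 1 := by rw [abs_of_pos hx2]; linarith [hx.1]
    have h := Real.hasSum_pow_div_log_of_abs_lt_one hx1
    simp only [sub_sub_cancel] at h
    have h2 := h.div_const (1 - x)
    have e2 : (fun n : ℕ => (1 - x) ^ (n + 1) / ((n : ℝ) + 1) / (1 - x))
        = fun n : ℕ => (1 - x) ^ n * ((n : ℝ) + 1)⁻¹ := by
      funext n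
      rw [pow_succ]
      have hn1 : ((n : ℝ) + 1) ≠ 0 := by positivity
      field_simp
    rw [e2] at h2
    have h3 := h2.mul_left (x ^ (t - 1))
    simp only [hf]
    rw [h3.tsum_eq, mul_div_assoc]
  · rw [funext hlin, ← ENNReal.ofReal_tsum_of_nonneg (T_nonneg ht0) hsummable]
    exact ENNReal.ofReal_ne_top

lemma E2 {t : ℝ} (ht : 1 < t) :
    ∑' m : ℕ, 1 / (t + (m : ℝ)) ^ 2
      = ∫ x in Ioo (0:ℝ) 1, x ^ (t - 1) * (-Real.log x) / (1 - x) := by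
  have ht0 : (0:ℝ) < t := by linarith
  set f : ℕ → ℝ → ℝ := fun m x => (x ^ (t - 1) * (-Real.log x)) * x ^ m with hf
  have hnn : ∀ m, ∀ x ∈ Ioo (0:ℝ) 1, 0 ≤ f m x := by
    intro m x hx
    have h1 : (0:ℝ) ≤ x ^ (t - 1) := Real.rpow_nonneg hx.1.le _
    have h2 : Real.log x ≤ 0 := Real.log_nonpos hx.1.le hx.2.le
    have h3 : (0:ℝ) ≤ x ^ m := pow_nonneg hx.1.le m
    have h4 : (0:ℝ) ≤ -Real.log x := by linarith
    positivity
  have heq : ∀ m : ℕ, EqOn (f m) (fun x : ℝ => x ^ (t + (m:ℝ) - 1) * (-Real.log x))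
      (Ioo (0:ℝ) 1) := by
    intro m x hx
    simp only [hf]
    rw [← Real.rpow_natCast x m,
      show t + (m:ℝ) - 1 = (t-1) + (m:ℝ) by ring, Real.rpow_add hx.1]
    ring
  have hmeas : ∀ m, AEStronglyMeasurable (f m) (volume.restrict (Ioo (0:ℝ) 1)) := by
    intro m
    apply ContinuousOn.aestronglyMeasurable ?_ measurableSet_Ioo
    apply ContinuousOn.mul ?_ (by fun_prop)
    apply ContinuousOn.mul
    · exact fun x _ => (Real.continuousAt_rpow_const x _ (Or.inr (by linarith))).continuousWithinAt
    · exact fun x hx => ((Real.continuousAt_log hx.1.ne').neg).continuousWithinAt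
  have hInt : ∀ m, IntegrableOn (f m) (Ioo (0:ℝ) 1) := by
    intro m
    have h0 : (0:ℝ) < t + (m:ℝ) - 1 := by
      have : (0:ℝ) ≤ (m:ℝ) := Nat.cast_nonneg m
      linarith
    have hI : IntegrableOn (fun x : ℝ => x ^ (t + (m:ℝ) - 1) * (-Real.log x)) (Icc (0:ℝ) 1) :=
      (contOn_rpow_neg_log h0).integrableOn_compact isCompact_Icc
    exact ((hI.mono_set Ioo_subset_Icc_self).congr_fun (fun x hx => (heq m hx).symm)
      measurableSet_Ioo)
  have hfint : ∀ m, ∫ x in Ioo (0:ℝ) 1, f m x = 1 / (t + (m : ℝ)) ^ 2 := by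
    intro m
    rw [setIntegral_congr_fun measurableSet_Ioo (heq m)]
    rw [← integral_Ioc_eq_integral_Ioo, ← intervalIntegral.integral_of_le zero_le_one]
    have hs : 1 < t + (m:ℝ) := by
      have : (0:ℝ) ≤ (m:ℝ) := Nat.cast_nonneg m
      linarith
    have := int_rpow_neg_log hs
    rw [this]
  have hsummable : Summable (fun m : ℕ => 1 / (t + (m : ℝ)) ^ 2) := by
    apply summable_aux (fun m => by positivity)
    intro m
    apply one_div_le_one_div_of_le (by positivity)
    have h1 : (m:ℝ) + 1 ≤ t + m := by linarith
    nlinarith [Nat.cast_nonneg m (α := ℝ)]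
  have hnn' : ∀ m : ℕ, (0:ℝ) ≤ 1 / (t + (m:ℝ)) ^ 2 := fun m => by positivity
  have hlin : ∀ m : ℕ, ∫⁻ x, ‖f m x‖ₑ ∂(volume.restrict (Ioo (0:ℝ) 1))
      = ENNReal.ofReal (1 / (t + (m : ℝ)) ^ 2) := by
    intro m
    rw [← hfint m, ofReal_integral_eq_lintegral_ofReal (hInt m)
      ((ae_restrict_iff' measurableSet_Ioo).2 (Eventually.of_forall (hnn m)))]
    apply lintegral_congr_ae
    filter_upwards [(ae_restrict_iff' measurableSet_Ioo).2 (Eventually.of_forall (hnn m))]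
      with x hx
    exact Real.enorm_eq_ofReal hx
  have hswap := MeasureTheory.integral_tsum (μ := volume.restrict (Ioo (0:ℝ) 1))
    (f := f) hmeas ?_
  · rw [← funext hfint, ← hswap]
    apply setIntegral_congr_fun measurableSet_Ioo
    intro x hx
    have hgeo := hasSum_geometric_of_lt_one hx.1.le hx.2
    have h3 := hgeo.mul_left (x ^ (t - 1) * (-Real.log x))
    simp only [hf]
    rw [h3.tsum_eq, div_eq_mul_inv, mul_assoc]
  · rw [funext hlin, ← ENNReal.ofReal_tsum_of_nonneg hnn' hsummable]
    exact ENNReal.ofReal_ne_top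

lemma hasSum_telescope_aux {t : ℝ} (ht : 0 < t) :
    HasSum (fun m : ℕ => 1 / (t + (m : ℝ)) - 1 / (t + (m : ℝ) + 1)) (1 / t) := by
  have hnn : ∀ m : ℕ, 0 ≤ 1 / (t + (m : ℝ)) - 1 / (t + (m : ℝ) + 1) := by
    intro m
    have h0 : (0:ℝ) < t + (m:ℝ) := by positivity
    rw [sub_nonneg]
    exact one_div_le_one_div_of_le h0 (by linarith)
  rw [hasSum_iff_tendsto_nat_of_nonneg hnn]
  have hps : ∀ M : ℕ, ∑ m ∈ Finset.range M, (1 / (t + (m:ℝ)) - 1 / (t + (m:ℝ) + 1))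
      = 1 / t - 1 / (t + (M:ℝ)) := by
    intro M
    have h := Finset.sum_range_sub' (f := fun m : ℕ => 1 / (t + (m:ℝ))) M
    push_cast at h
    simpa [add_assoc] using h
  rw [funext hps]
  have h1 : Tendsto (fun M : ℕ => t + (M:ℝ)) atTop atTop :=
    tendsto_atTop_add_const_left _ t tendsto_natCast_atTop_atTop
  have h2 := h1.inv_tendsto_atTop
  simp only [one_div]
  simpa using tendsto_const_nhds.sub h2

lemma sum_sq_summable {t : ℝ} (ht : 1 < t) :
    Summable (fun m : ℕ => 1 / (t + (m : ℝ)) ^ 2) := by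
  apply summable_aux (fun m => by positivity)
  intro m
  apply one_div_le_one_div_of_le (by positivity)
  nlinarith [Nat.cast_nonneg m (α := ℝ)]

lemma P2 {t : ℝ} (ht : 1 < t) :
    (∑' n : ℕ+, ((n : ℕ).factorial : ℝ) /
        (((n : ℝ) + 1) * ∏ k ∈ Finset.range ((n : ℕ) + 1), (t + (k : ℝ))))
      = ∑' m : ℕ, (1 / (t + (m:ℝ)) ^ 2 - (1 / (t + (m:ℝ)) - 1 / (t + (m:ℝ) + 1))) := by
  have ht0 : (0:ℝ) < t := by linarith
  have hsum : Summable (fun n : ℕ =>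
      (n.factorial : ℝ) / (((n : ℝ) + 1) * ∏ k ∈ Finset.range (n + 1), (t + (k : ℝ)))) :=
    summable_aux (T_nonneg ht0) (T_le ht)
  have e0 : (∑' n : ℕ+, ((n : ℕ).factorial : ℝ) /
        (((n : ℝ) + 1) * ∏ k ∈ Finset.range ((n : ℕ) + 1), (t + (k : ℝ))))
      = ∑' m : ℕ, ((m + 1).factorial : ℝ) /
        (((m : ℝ) + 1 + 1) * ∏ k ∈ Finset.range (m + 1 + 1), (t + (k : ℝ))) := by
    rw [← Equiv.pnatEquivNat.symm.tsum_eq]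
    apply tsum_congr
    intro m
    simp only [Equiv.pnatEquivNat, Equiv.symm, Equiv.coe_fn_mk, Nat.succPNat_coe]
    push_cast
    norm_num
  have e1 := Summable.tsum_eq_zero_add hsum
  have hT0 : (Nat.factorial 0 : ℝ) /
      (((0:ℕ) : ℝ) + 1) / (∏ k ∈ Finset.range (0 + 1), (t + (k : ℝ))) = 1 / t := by
    simp [Finset.range_one]
  have hE := (E1 ht).trans (E2 ht).symm
  have h3 := hasSum_telescope_aux ht0
  have h4 := (sum_sq_summable ht).hasSum.sub h3
  rw [e0, h4.tsum_eq, ← hE, e1]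
  push_cast
  simp [Finset.range_one]

lemma g_nonneg {m : ℕ} {t : ℝ} (ht : 1 < t) :
    0 ≤ 1 / (t + (m:ℝ)) ^ 2 - (1 / (t + (m:ℝ)) - 1 / (t + (m:ℝ) + 1)) := by
  have h0 : (0:ℝ) < t + (m:ℝ) := by positivity
  have h1 : (0:ℝ) < t + (m:ℝ) + 1 := by positivity
  have e : 1 / (t + (m:ℝ)) - 1 / (t + (m:ℝ) + 1) = 1 / ((t + (m:ℝ)) * (t + (m:ℝ) + 1)) := by
    field_simp
    ring
  rw [e, sub_nonneg]
  apply one_div_le_one_div_of_le (by positivity)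
  nlinarith

lemma g_le {m : ℕ} {t : ℝ} (ht : 1 < t) :
    1 / (t + (m:ℝ)) ^ 2 - (1 / (t + (m:ℝ)) - 1 / (t + (m:ℝ) + 1)) ≤ t ^ (-2 : ℝ) := by
  have h0 : (0:ℝ) < t + (m:ℝ) := by positivity
  have h1 : (0:ℝ) < t + (m:ℝ) + 1 := by positivity
  have ht0 : (0:ℝ) < t := by linarith
  have e : t ^ (-2 : ℝ) = 1 / t ^ 2 := by
    rw [show (-2:ℝ) = -((2:ℕ):ℝ) by norm_num, Real.rpow_neg ht0.le, Real.rpow_natCast, one_div]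
  rw [e]
  have h2 : 1 / (t + (m:ℝ)) ^ 2 ≤ 1 / t ^ 2 := by
    apply one_div_le_one_div_of_le (by positivity)
    nlinarith [Nat.cast_nonneg m (α := ℝ)]
  have h3 : 0 ≤ 1 / (t + (m:ℝ)) - 1 / (t + (m:ℝ) + 1) := by
    rw [sub_nonneg]
    exact one_div_le_one_div_of_le h0 (by linarith)
  linarith

lemma g_contOn {m : ℕ} : ContinuousOn
    (fun t : ℝ => 1 / (t + (m:ℝ)) ^ 2 - (1 / (t + (m:ℝ)) - 1 / (t + (m:ℝ) + 1))) (Ioi 1) := by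
  have hden : ∀ t ∈ Ioi (1:ℝ), (0:ℝ) < t + (m:ℝ) := by
    intro t ht
    have := Nat.cast_nonneg m (α := ℝ)
    simp only [mem_Ioi] at ht
    linarith
  apply ContinuousOn.sub
  · exact ContinuousOn.div continuousOn_const (by fun_prop)
      (fun t ht => by have := hden t ht; positivity)
  · apply ContinuousOn.sub
    · exact ContinuousOn.div continuousOn_const (by fun_prop)
        (fun t ht => by have := hden t ht; positivity)
    · exact ContinuousOn.div continuousOn_const (by fun_prop)
        (fun t ht => by have := hden t ht; positivity)

lemma g_integrableOn {m : ℕ} : IntegrableOn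
    (fun t : ℝ => 1 / (t + (m:ℝ)) ^ 2 - (1 / (t + (m:ℝ)) - 1 / (t + (m:ℝ) + 1))) (Ioi 1) := by
  have hg : IntegrableOn (fun t : ℝ => t ^ (-2 : ℝ)) (Ioi 1) :=
    integrableOn_Ioi_rpow_of_lt (by norm_num) one_pos
  have hb : ∀ᵐ t ∂(volume.restrict (Ioi (1:ℝ))),
      ‖1 / (t + (m:ℝ)) ^ 2 - (1 / (t + (m:ℝ)) - 1 / (t + (m:ℝ) + 1))‖ ≤ t ^ (-2:ℝ) := by
    rw [ae_restrict_iff' measurableSet_Ioi]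
    apply Eventually.of_forall
    intro t ht
    rw [Real.norm_eq_abs, abs_of_nonneg (g_nonneg (mem_Ioi.mp ht))]
    exact g_le (mem_Ioi.mp ht)
  exact Integrable.mono' hg (g_contOn.aestronglyMeasurable measurableSet_Ioi) hb

lemma g_integral {m : ℕ} : ∫ t in Ioi (1:ℝ),
    (1 / (t + (m:ℝ)) ^ 2 - (1 / (t + (m:ℝ)) - 1 / (t + (m:ℝ) + 1)))
    = 1 / ((m:ℝ) + 1) - (Real.log ((m:ℝ) + 2) - Real.log ((m:ℝ) + 1)) := by
  set c : ℝ := (m:ℝ) with hc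
  have hc0 : (0:ℝ) ≤ c := Nat.cast_nonneg m
  have key := MeasureTheory.integral_Ioi_of_hasDerivAt_of_tendsto' (a := 1) (m := 0)
    (f := fun t => -(1 / (t + c)) - Real.log (t + c) + Real.log (t + c + 1))
    (f' := fun t => 1 / (t + c) ^ 2 - (1 / (t + c) - 1 / (t + c + 1)))
    ?_ g_integrableOn ?_
  · rw [key]
    ring_nf
  · intro x hx
    have hx1 : (1:ℝ) ≤ x := hx
    have h0 : (0:ℝ) < x + c := by linarith
    have h1 : (0:ℝ) < x + c + 1 := by linarith
    have d1 : HasDerivAt (fun t : ℝ => t + c) 1 x := (hasDerivAt_id x).add_const c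
    have d2 : HasDerivAt (fun t : ℝ => t + c + 1) 1 x := d1.add_const 1
    have e1 : HasDerivAt (fun t : ℝ => (t + c)⁻¹) (-(1 / (x + c) ^ 2)) x := by
      have := d1.inv h0.ne'
      simpa [neg_div, Pi.inv_def] using this
    have e2 : HasDerivAt (fun t : ℝ => Real.log (t + c)) ((x + c)⁻¹) x := by
      have := (Real.hasDerivAt_log h0.ne').comp x d1
      simpa [Function.comp_def] using this
    have e3 : HasDerivAt (fun t : ℝ => Real.log (t + c + 1)) ((x + c + 1)⁻¹) x := by
      have := (Real.hasDerivAt_log h1.ne').comp x d2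
      simpa [Function.comp_def] using this
    have := ((e1.neg.sub e2).add e3)
    convert this using 1
    · funext t
      rw [one_div]
      rfl
    · field_simp
      ring
  · have h1 : Tendsto (fun t : ℝ => t + c) atTop atTop :=
      tendsto_atTop_add_const_right _ c tendsto_id
    have h2 : Tendsto (fun t : ℝ => -(1 / (t + c))) atTop (𝓝 0) := by
      simp only [one_div]
      simpa using h1.inv_tendsto_atTop.neg
    have hr : Tendsto (fun t : ℝ => (t + c + 1) / (t + c)) atTop (𝓝 1) := by
      have he : (fun t : ℝ => (t + c + 1) / (t + c)) =ᶠ[atTop] fun t => 1 + (t + c)⁻¹ := by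
        filter_upwards [eventually_gt_atTop 0] with t ht
        have : (0:ℝ) < t + c := by linarith
        field_simp
      rw [tendsto_congr' he]
      simpa using tendsto_const_nhds.add h1.inv_tendsto_atTop
    have hlog : Tendsto (fun t : ℝ => Real.log ((t + c + 1) / (t + c))) atTop (𝓝 0) := by
      have := (Real.continuousAt_log one_ne_zero).tendsto.comp hr
      simpa [Function.comp_def] using this
    have h3 : Tendsto (fun t : ℝ => Real.log (t + c + 1) - Real.log (t + c)) atTop (𝓝 0) := by
      apply Tendsto.congr' _ hlog
      filter_upwards [eventually_gt_atTop 0] with t ht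
      have h0 : (0:ℝ) < t + c := by linarith
      rw [Real.log_div (by linarith) h0.ne']
    have := h2.add h3
    rw [add_zero] at this
    apply this.congr
    intro t
    ring

lemma v_nonneg (m : ℕ) :
    0 ≤ 1 / ((m:ℝ) + 1) - (Real.log ((m:ℝ) + 2) - Real.log ((m:ℝ) + 1)) := by
  have h1 : (0:ℝ) < ((m:ℝ) + 2) / ((m:ℝ) + 1) := by positivity
  have h2 := Real.log_le_sub_one_of_pos h1
  rw [Real.log_div (by positivity) (by positivity)] at h2
  have h3 : ((m:ℝ) + 2) / ((m:ℝ) + 1) - 1 = 1 / ((m:ℝ) + 1) := by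
    field_simp
    norm_num
  rw [h3] at h2
  linarith

lemma hasSum_gamma : HasSum
    (fun m : ℕ => 1 / ((m:ℝ) + 1) - (Real.log ((m:ℝ) + 2) - Real.log ((m:ℝ) + 1)))
    Real.eulerMascheroniConstant := by
  rw [hasSum_iff_tendsto_nat_of_nonneg v_nonneg]
  have hps : ∀ M : ℕ, ∑ m ∈ Finset.range M,
      (1 / ((m:ℝ) + 1) - (Real.log ((m:ℝ) + 2) - Real.log ((m:ℝ) + 1)))
      = (harmonic M : ℝ) - Real.log ((M:ℝ) + 1) := by
    intro M
    rw [Finset.sum_sub_distrib]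
    congr 1
    · rw [harmonic, Rat.cast_sum]
      apply Finset.sum_congr rfl
      intro i _
      push_cast
      rw [one_div]
    · have h := Finset.sum_range_sub (f := fun m : ℕ => Real.log ((m:ℝ) + 1)) M
      push_cast at h
      simp only [Real.log_one, zero_add, sub_zero] at h
      rw [← h]
      apply Finset.sum_congr rfl
      intro i _
      ring_nf
  rw [funext hps]
  exact Real.tendsto_harmonic_sub_log_add_one

theorem stmt4 :
    Real.eulerMascheroniConstant =
      ∫ t in Set.Ioi (1 : ℝ),
        ∑' n : ℕ+, ((n : ℕ).factorial : ℝ) /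
          (((n : ℝ) + 1) * ∏ k ∈ Finset.range ((n : ℕ) + 1), (t + k)) := by
  have hcongr : ∀ t ∈ Ioi (1:ℝ), (∑' n : ℕ+, ((n : ℕ).factorial : ℝ) /
      (((n : ℝ) + 1) * ∏ k ∈ Finset.range ((n : ℕ) + 1), (t + (k:ℝ))))
      = ∑' m : ℕ, (1 / (t + (m:ℝ)) ^ 2 - (1 / (t + (m:ℝ)) - 1 / (t + (m:ℝ) + 1))) :=
    fun t ht => P2 (mem_Ioi.mp ht)
  rw [setIntegral_congr_fun measurableSet_Ioi hcongr]
  have hmeas : ∀ m : ℕ, AEStronglyMeasurable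
      (fun t : ℝ => 1 / (t + (m:ℝ)) ^ 2 - (1 / (t + (m:ℝ)) - 1 / (t + (m:ℝ) + 1)))
      (volume.restrict (Ioi 1)) :=
    fun m => g_contOn.aestronglyMeasurable measurableSet_Ioi
  have hlin : ∀ m : ℕ, ∫⁻ t, ‖1 / (t + (m:ℝ)) ^ 2 - (1 / (t + (m:ℝ)) - 1 / (t + (m:ℝ) + 1))‖ₑ
      ∂(volume.restrict (Ioi 1))
      = ENNReal.ofReal (1 / ((m:ℝ) + 1) - (Real.log ((m:ℝ) + 2) - Real.log ((m:ℝ) + 1))) := by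
    intro m
    rw [← g_integral (m := m), ofReal_integral_eq_lintegral_ofReal g_integrableOn
      ((ae_restrict_iff' measurableSet_Ioi).2 (Eventually.of_forall
        (fun t ht => g_nonneg (mem_Ioi.mp ht))))]
    apply lintegral_congr_ae
    filter_upwards [(ae_restrict_iff' measurableSet_Ioi).2 (Eventually.of_forall
      (fun t ht => g_nonneg (m := m) (mem_Ioi.mp ht)))] with t ht
    exact Real.enorm_eq_ofReal ht
  have hfin : ∑' m : ℕ, ∫⁻ t, ‖1 / (t + (m:ℝ)) ^ 2 -
      (1 / (t + (m:ℝ)) - 1 / (t + (m:ℝ) + 1))‖ₑ ∂(volume.restrict (Ioi 1)) ≠ ⊤ := by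
    rw [funext hlin, ← ENNReal.ofReal_tsum_of_nonneg v_nonneg hasSum_gamma.summable]
    exact ENNReal.ofReal_ne_top
  rw [MeasureTheory.integral_tsum hmeas hfin]
  rw [tsum_congr (fun m : ℕ => g_integral (m := m))]
  exact hasSum_gamma.tsum_eq.symm
end

section
/- Euler's constant equals the classical integral γ = ∫_0^1 (1/ln u + 1/(1−u)) du. -/
open MeasureTheory Real Set Filter Topology

/-- Bounds for the integrand. -/
lemma gBounds {u : ℝ} (hu : u ∈ Set.Ioo (0:ℝ) 1) :
    0 ≤ 1 / Real.log u + 1 / (1 - u) ∧ 1 / Real.log u + 1 / (1 - u) ≤ 1 := by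
  obtain ⟨hu0, hu1⟩ := hu
  have hlog : Real.log u < 0 := Real.log_neg hu0 hu1
  set L : ℝ := -Real.log u with hL
  clear_value L
  have hLpos : 0 < L := by rw [hL]; linarith
  have h1u : 0 < 1 - u := by linarith
  have hle : 1 - u ≤ L := by
    have := Real.log_le_sub_one_of_pos hu0
    rw [hL]; linarith
  have hkey : u * L ≤ 1 - u := by
    have h2 : 1 + L ≤ Real.exp L := by linarith [Real.add_one_le_exp L]
    have h3 : Real.exp L = u⁻¹ := by
      rw [hL, Real.exp_neg, Real.exp_log hu0]
    rw [h3] at h2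
    have := (mul_le_mul_of_nonneg_left h2 hu0.le)
    rw [mul_inv_cancel₀ hu0.ne'] at this
    nlinarith
  have hrw : 1 / Real.log u + 1 / (1 - u) = (L - (1 - u)) / ((1 - u) * L) := by
    have hL' : Real.log u = -L := by rw [hL]; ring
    rw [hL']
    rw [div_add_div _ _ (neg_ne_zero.mpr hLpos.ne') h1u.ne']
    rw [div_eq_div_iff (by nlinarith : (-L) * (1 - u) ≠ 0) (by positivity)]
    ring
  rw [hrw]
  constructor
  · exact div_nonneg (by linarith) (by positivity)
  · rw [div_le_one (by positivity)]
    nlinarith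

lemma harmonic_integral (n : ℕ) :
    (harmonic n : ℝ) = ∫ u in Set.Ioo (0:ℝ) 1, ∑ k ∈ Finset.range n, u ^ k := by
  rw [← integral_Ioc_eq_integral_Ioo, ← intervalIntegral.integral_of_le zero_le_one,
    intervalIntegral.integral_finset_sum
      (fun k _ => (intervalIntegral.intervalIntegrable_pow k))]
  rw [harmonic]
  push_cast
  refine Finset.sum_congr rfl fun k _ => ?_
  rw [integral_pow]
  norm_num

lemma log_integral (n : ℕ) :
    Real.log (n + 1) = ∫ u in Set.Ioo (0:ℝ) 1, (1 - u ^ n) / (-Real.log u) := by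
  -- inner integral in s
  have inner : ∀ u ∈ Set.Ioo (0:ℝ) 1,
      (∫ s in Set.Ioc (0:ℝ) n, Real.exp (s * Real.log u)) = (1 - u ^ n) / (-Real.log u) := by
    intro u hu
    have hu0 := hu.1
    have hlog : Real.log u < 0 := Real.log_neg hu.1 hu.2
    set c : ℝ := Real.log u with hc
    rw [← intervalIntegral.integral_of_le (by positivity : (0:ℝ) ≤ n)]
    have hderiv : ∀ x ∈ Set.uIcc (0:ℝ) n,
        HasDerivAt (fun s => Real.exp (s * c) / c) (Real.exp (x * c)) x := by
      intro x _
      have h1 : HasDerivAt (fun s : ℝ => s * c) c x := by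
        simpa using (hasDerivAt_id x).mul_const c
      have h2 := (h1.exp).div_const c
      have hc0 : c ≠ 0 := hlog.ne
      convert h2 using 1
      · rfl
      · rfl
      field_simp
    rw [intervalIntegral.integral_eq_sub_of_hasDerivAt hderiv
      ((Real.continuous_exp.comp (continuous_id.mul continuous_const)).intervalIntegrable 0 n)]
    have hexp : Real.exp ((n : ℝ) * c) = u ^ n := by
      rw [hc, ← Real.log_pow, Real.exp_log (by positivity)]
    rw [hexp]
    simp only [zero_mul, Real.exp_zero]
    rw [div_sub_div_same]
    rw [div_neg, ← neg_div, neg_sub]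
  -- integrability on the product
  have hint : Integrable (fun p : ℝ × ℝ => Real.exp (p.2 * Real.log p.1))
      ((volume.restrict (Set.Ioo (0:ℝ) 1)).prod (volume.restrict (Set.Ioc (0:ℝ) n))) := by
    refine Integrable.mono' (integrable_const 1) ?_ ?_
    · exact (Real.measurable_exp.comp
        (measurable_snd.mul (Real.measurable_log.comp measurable_fst))).aestronglyMeasurable
    · rw [Measure.prod_restrict]
      rw [ae_restrict_iff' (measurableSet_Ioo.prod measurableSet_Ioc)]
      refine Filter.Eventually.of_forall fun p hp => ?_
      obtain ⟨hp1, hp2⟩ := hp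
      rw [Real.norm_eq_abs, abs_of_pos (Real.exp_pos _), Real.exp_le_one_iff]
      exact mul_nonpos_of_nonneg_of_nonpos hp2.1.le (Real.log_nonpos hp1.1.le hp1.2.le)
  have swap := MeasureTheory.integral_integral_swap (f := fun u s => Real.exp (s * Real.log u)) hint
  -- rewrite both sides of swap
  have lhs_eq : (∫ u in Set.Ioo (0:ℝ) 1, ∫ s in Set.Ioc (0:ℝ) n, Real.exp (s * Real.log u))
      = ∫ u in Set.Ioo (0:ℝ) 1, (1 - u ^ n) / (-Real.log u) :=
    setIntegral_congr_fun measurableSet_Ioo fun u hu => inner u hu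
  have rhs_eq : (∫ s in Set.Ioc (0:ℝ) n, ∫ u in Set.Ioo (0:ℝ) 1, Real.exp (s * Real.log u))
      = Real.log (n + 1) := by
    have inner2 : ∀ s ∈ Set.Ioc (0:ℝ) n,
        (∫ u in Set.Ioo (0:ℝ) 1, Real.exp (s * Real.log u)) = (s + 1)⁻¹ := by
      intro s hs
      have h1 : (∫ u in Set.Ioo (0:ℝ) 1, Real.exp (s * Real.log u))
          = ∫ u in Set.Ioo (0:ℝ) 1, u ^ s := by
        refine setIntegral_congr_fun measurableSet_Ioo fun u hu => ?_
        rw [Real.rpow_def_of_pos hu.1, mul_comm]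
      rw [h1, ← integral_Ioc_eq_integral_Ioo, ← intervalIntegral.integral_of_le zero_le_one,
        integral_rpow (Or.inl (by linarith [hs.1] : (-1:ℝ) < s))]
      rw [Real.one_rpow, Real.zero_rpow (by linarith [hs.1] : s + 1 ≠ 0)]
      norm_num
    rw [setIntegral_congr_fun measurableSet_Ioc inner2,
      ← intervalIntegral.integral_of_le (by positivity : (0:ℝ) ≤ n)]
    have hderiv : ∀ x ∈ Set.uIcc (0:ℝ) n,
        HasDerivAt (fun s => Real.log (s + 1)) (x + 1)⁻¹ x := by
      intro x hx
      rw [Set.uIcc_of_le (by positivity : (0:ℝ) ≤ n)] at hx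
      have h1 : HasDerivAt (fun s : ℝ => s + 1) 1 x := (hasDerivAt_id x).add_const 1
      have h2 := (Real.hasDerivAt_log (by linarith [hx.1] : x + 1 ≠ 0)).comp x h1
      rw [mul_one] at h2; exact h2
    rw [intervalIntegral.integral_eq_sub_of_hasDerivAt hderiv]
    · norm_num
    · apply ContinuousOn.intervalIntegrable
      refine ContinuousOn.inv₀ (by fun_prop) fun x hx => ?_
      rw [Set.uIcc_of_le (by positivity : (0:ℝ) ≤ n)] at hx
      intro h; linarith [hx.1]
  rw [← lhs_eq, swap, rhs_eq]

lemma key_eq (n : ℕ) :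
    (harmonic n : ℝ) - Real.log (n + 1)
      = ∫ u in Set.Ioo (0:ℝ) 1, (1 - u ^ n) * (1 / Real.log u + 1 / (1 - u)) := by
  rw [harmonic_integral, log_integral]
  have hint1 : IntegrableOn (fun u : ℝ => ∑ k ∈ Finset.range n, u ^ k) (Set.Ioo (0:ℝ) 1) := by
    exact ((by fun_prop : Continuous (fun u : ℝ => ∑ k ∈ Finset.range n, u ^ k)).integrableOn_Icc
      (a := 0) (b := 1)).mono_set Set.Ioo_subset_Icc_self
  have hint2 : IntegrableOn (fun u : ℝ => (1 - u ^ n) / (-Real.log u)) (Set.Ioo (0:ℝ) 1) := by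
    refine Integrable.mono' (integrable_const (n : ℝ)) ?_ ?_
    · exact ((measurable_const.sub (measurable_id.pow_const n)).div
        Real.measurable_log.neg).aestronglyMeasurable
    · rw [ae_restrict_iff' measurableSet_Ioo]
      refine Filter.Eventually.of_forall fun u hu => ?_
      have hu0 := hu.1
      have hlog : Real.log u < 0 := Real.log_neg hu.1 hu.2
      have hLpos : 0 < -Real.log u := by linarith
      have hun1 : u ^ n ≤ 1 := pow_le_one₀ hu0.le hu.2.le
      have hub : 1 - u ^ n ≤ n * (-Real.log u) := by
        have h2 : 1 + (n : ℝ) * Real.log u ≤ Real.exp ((n : ℝ) * Real.log u) := by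
          linarith [Real.add_one_le_exp ((n : ℝ) * Real.log u)]
        have h3 : Real.exp ((n : ℝ) * Real.log u) = u ^ n := by
          rw [← Real.log_pow, Real.exp_log (by positivity)]
        rw [h3] at h2
        nlinarith
      rw [Real.norm_eq_abs, abs_of_nonneg (div_nonneg (by linarith) hLpos.le),
        div_le_iff₀ hLpos]
      exact hub
  rw [← integral_sub hint1 hint2]
  refine setIntegral_congr_fun measurableSet_Ioo fun u hu => ?_
  have hu0 := hu.1
  have hu1 := hu.2
  have hlog : Real.log u < 0 := Real.log_neg hu0 hu1
  have hsum : ∑ k ∈ Finset.range n, u ^ k = (1 - u ^ n) / (1 - u) := by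
    rw [geom_sum_eq (by linarith : u ≠ 1)]
    rw [div_eq_div_iff (by linarith : u - 1 ≠ 0) (by linarith : (1:ℝ) - u ≠ 0)]
    ring
  rw [hsum, div_neg, sub_neg_eq_add, mul_add, mul_one_div, mul_one_div]
  ring

theorem stmt9 :
    Real.eulerMascheroniConstant =
      ∫ u in Set.Ioo (0 : ℝ) 1, (1 / Real.log u + 1 / (1 - u)) := by
  have hdct : Tendsto (fun n : ℕ => ∫ u in Set.Ioo (0:ℝ) 1,
        (1 - u ^ n) * (1 / Real.log u + 1 / (1 - u))) atTop
      (𝓝 (∫ u in Set.Ioo (0:ℝ) 1, (1 / Real.log u + 1 / (1 - u)))) := by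
    refine tendsto_integral_of_dominated_convergence (fun _ => (1:ℝ)) ?_ ?_ ?_ ?_
    · intro n
      exact ((measurable_const.sub (measurable_id.pow_const n)).mul
        ((measurable_const.div Real.measurable_log).add
          (measurable_const.div (measurable_const.sub measurable_id)))).aestronglyMeasurable
    · exact integrableOn_const (by simp)
    · intro n
      rw [ae_restrict_iff' measurableSet_Ioo]
      refine Filter.Eventually.of_forall fun u hu => ?_
      obtain ⟨hg0, hg1⟩ := gBounds hu
      have h1 : 0 ≤ 1 - u ^ n := by
        have := pow_le_one₀ hu.1.le hu.2.le (n := n); linarith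
      have h2 : 1 - u ^ n ≤ 1 := by
        have := pow_nonneg hu.1.le n; linarith
      rw [Real.norm_eq_abs, abs_of_nonneg (mul_nonneg h1 hg0)]
      exact mul_le_one₀ h2 hg0 hg1
    · rw [ae_restrict_iff' measurableSet_Ioo]
      refine Filter.Eventually.of_forall fun u hu => ?_
      have hpow : Tendsto (fun n : ℕ => u ^ n) atTop (𝓝 0) :=
        tendsto_pow_atTop_nhds_zero_of_lt_one hu.1.le hu.2
      have := ((tendsto_const_nhds (x := (1:ℝ))).sub hpow).mul
        (tendsto_const_nhds (x := 1 / Real.log u + 1 / (1 - u)))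
      simpa using this
  have hseq := Real.tendsto_harmonic_sub_log_add_one
  have : Tendsto (fun n : ℕ => (harmonic n : ℝ) - Real.log (n + 1)) atTop
      (𝓝 (∫ u in Set.Ioo (0:ℝ) 1, (1 / Real.log u + 1 / (1 - u)))) := by
    refine hdct.congr fun n => (key_eq n).symm
  exact tendsto_nhds_unique hseq this
end

section
/- Euler's constant equals the double integral γ = ∫_0^1 ∫_0^{1−u} −v/((1−v)(1−u) ln u) dv du. -/
open MeasureTheory Set Real Filter Topology intervalIntegral

noncomputable def gg (u : ℝ) : ℝ := 1 / (1 - u) + 1 / Real.log u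

lemma log_neg' {u : ℝ} (hu : u ∈ Ioo (0:ℝ) 1) : Real.log u < 0 :=
  Real.log_neg hu.1 hu.2

lemma gg_nonneg {u : ℝ} (hu : u ∈ Ioo (0:ℝ) 1) : 0 ≤ gg u := by
  have h1 : (0:ℝ) < 1 - u := by linarith [hu.2]
  have hl : Real.log u ≤ u - 1 := Real.log_le_sub_one_of_pos hu.1
  have hln : Real.log u < 0 := log_neg' hu
  have : 1 / (- Real.log u) ≤ 1 / (1 - u) := by
    apply one_div_le_one_div_of_le h1; linarith
  have : - (1 / Real.log u) ≤ 1 / (1 - u) := by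
    rwa [← one_div_neg_eq_neg_one_div]
  unfold gg; linarith

lemma gg_le_one {u : ℝ} (hu : u ∈ Ioo (0:ℝ) 1) : gg u ≤ 1 := by
  have h1 : (0:ℝ) < 1 - u := by linarith [hu.2]
  have hln : Real.log u < 0 := log_neg' hu
  -- log u ≥ 1 - 1/u  ⇒  u * log u ≥ u - 1  ⇒  1 - u + u * log u ≥ 0
  have hl2 : 1 - u⁻¹ ≤ Real.log u := by
    have := Real.log_le_sub_one_of_pos (x := u⁻¹) (inv_pos.mpr hu.1)
    rw [Real.log_inv] at this
    linarith
  have key : 0 ≤ 1 - u + u * Real.log u := by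
    have : u * (1 - u⁻¹) ≤ u * Real.log u :=
      mul_le_mul_of_nonneg_left hl2 hu.1.le
    have hu0 : u ≠ 0 := hu.1.ne'
    rw [mul_sub, mul_inv_cancel₀ hu0, mul_one] at this
    linarith
  -- gg u ≤ 1 ⇔ (log u + 1 - u) ≥ (1-u) log u  (denominator negative)
  unfold gg
  rw [div_add_div _ _ (by linarith : (1:ℝ) - u ≠ 0) hln.ne, div_le_one_iff]
  right; right
  constructor
  · nlinarith
  · nlinarith

lemma inner_eq {u : ℝ} (hu : u ∈ Ioo (0:ℝ) 1) :
    (∫ v in Ioo (0 : ℝ) (1 - u), -v / ((1 - v) * (1 - u) * Real.log u)) = gg u := by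
  have h1 : (0:ℝ) < 1 - u := by linarith [hu.2]
  have hln : Real.log u < 0 := log_neg' hu
  have hc : (1 - u) * Real.log u ≠ 0 := by
    exact mul_ne_zero (by linarith) hln.ne
  rw [← integral_Ioc_eq_integral_Ioo, ← intervalIntegral.integral_of_le h1.le]
  have hcong : ∀ v ∈ uIcc (0:ℝ) (1 - u),
      -v / ((1 - v) * (1 - u) * Real.log u)
        = (1 / ((1 - u) * Real.log u)) * (1 - (1 - v)⁻¹) := by
    intro v hv
    rw [uIcc_of_le h1.le] at hv
    have hv1 : (1:ℝ) - v ≠ 0 := by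
      have := hv.2; have := hu.1; intro h; linarith
    have h2 : (1:ℝ) - (1 - v)⁻¹ = -v / (1 - v) := by
      field_simp
      ring
    rw [h2, one_div, inv_mul_eq_div, div_div, mul_assoc]
  rw [intervalIntegral.integral_congr hcong, intervalIntegral.integral_const_mul]
  have hInt : IntervalIntegrable (fun v : ℝ => (1 - v)⁻¹) volume 0 (1 - u) := by
    apply ContinuousOn.intervalIntegrable
    apply ContinuousOn.inv₀ (by fun_prop)
    intro v hv
    rw [uIcc_of_le h1.le] at hv
    have := hv.2; have := hu.1; intro h; linarith
  rw [intervalIntegral.integral_sub intervalIntegrable_const hInt]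
  have hinv : (∫ v in (0:ℝ)..(1 - u), (1 - v)⁻¹) = - Real.log u := by
    have := intervalIntegral.integral_comp_sub_left (a := (0:ℝ)) (b := 1 - u)
      (fun x : ℝ => x⁻¹) 1
    simp only [sub_zero, sub_sub_cancel] at this
    rw [this, integral_inv]
    · rw [Real.log_div one_ne_zero hu.1.ne', Real.log_one]; ring
    · rw [uIcc_of_le (by linarith : u ≤ 1)]
      intro h; exact absurd h.1 (not_le.mpr hu.1)
  rw [hinv]
  simp only [intervalIntegral.integral_const, smul_eq_mul, mul_one, sub_zero]
  unfold gg
  rw [div_add_div _ _ (by linarith : (1:ℝ) - u ≠ 0) hln.ne, one_div, inv_mul_eq_div]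
  congr 1
  ring

lemma stepA (n : ℕ) :
    (harmonic n : ℝ) = ∫ u in Ioo (0:ℝ) 1, (1 - u ^ n) / (1 - u) := by
  have hcong : ∀ u ∈ Ioo (0:ℝ) 1,
      (1 - u ^ n) / (1 - u) = ∑ k ∈ Finset.range n, u ^ k := by
    intro u hu
    rw [geom_sum_eq (by exact ne_of_lt hu.2)]
    rw [div_eq_div_iff (by intro h; nlinarith [hu.2] : (1:ℝ) - u ≠ 0)
      (by intro h; nlinarith [hu.2] : u - 1 ≠ 0)]
    ring
  rw [setIntegral_congr_fun measurableSet_Ioo hcong]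
  rw [MeasureTheory.integral_finset_sum]
  · have : ∀ k ∈ Finset.range n,
        (∫ u in Ioo (0:ℝ) 1, u ^ k) = 1 / (k + 1 : ℝ) := by
      intro k _
      rw [← integral_Ioc_eq_integral_Ioo, ← intervalIntegral.integral_of_le zero_le_one,
        integral_pow]
      simp
    rw [Finset.sum_congr rfl this, harmonic]
    push_cast
    simp [one_div]
  · intro k _
    apply ContinuousOn.integrableOn_Icc (by fun_prop) |>.mono_set Ioo_subset_Icc_self

lemma stepB (n : ℕ) :
    Real.log (n + 1) = (∫ u in Ioo (0:ℝ) 1, (1 - u ^ n) / (-Real.log u)) ∧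
      IntegrableOn (fun u => (1 - u ^ n) / (-Real.log u)) (Ioo (0:ℝ) 1) := by
  set μ := volume.restrict (Ioo (0:ℝ) 1) with hμ
  set ν := volume.restrict (Ioc (0:ℝ) (n:ℝ)) with hν
  haveI : IsFiniteMeasure μ := ⟨by rw [hμ, Measure.restrict_apply_univ]; exact measure_Ioo_lt_top⟩
  haveI : IsFiniteMeasure ν := ⟨by rw [hν, Measure.restrict_apply_univ]; exact measure_Ioc_lt_top⟩
  set F : ℝ → ℝ → ℝ := fun u s => Real.exp (s * Real.log u) with hF
  have hmeas : Measurable (Function.uncurry F) := by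
    apply Measurable.exp
    exact measurable_snd.mul (Real.measurable_log.comp measurable_fst)
  have hae : ∀ᵐ p : ℝ × ℝ ∂(μ.prod ν), p.1 ∈ Ioo (0:ℝ) 1 ∧ p.2 ∈ Ioc (0:ℝ) (n:ℝ) := by
    rw [hμ, hν, Measure.prod_restrict]
    filter_upwards [ae_restrict_mem (measurableSet_Ioo.prod measurableSet_Ioc)] with p hp
    exact ⟨hp.1, hp.2⟩
  have hint : Integrable (Function.uncurry F) (μ.prod ν) := by
    apply Integrable.mono' (integrable_const (1:ℝ)) hmeas.aestronglyMeasurable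
    filter_upwards [hae] with p hp
    simp only [Function.uncurry, hF]
    rw [Real.norm_eq_abs, abs_of_pos (Real.exp_pos _), Real.exp_le_one_iff]
    exact mul_nonpos_of_nonneg_of_nonpos hp.2.1.le (Real.log_nonpos hp.1.1.le hp.1.2.le)
  have hswap := integral_integral_swap hint
  -- inner integral over s, for u ∈ Ioo 0 1
  have hinner1 : ∀ u ∈ Ioo (0:ℝ) 1,
      (∫ s, F u s ∂ν) = (1 - u ^ n) / (-Real.log u) := by
    intro u hu
    have hln : Real.log u < 0 := log_neg' hu
    rw [hν, ← intervalIntegral.integral_of_le (Nat.cast_nonneg n : (0:ℝ) ≤ (n:ℝ))]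
    have : (∫ s in (0:ℝ)..(n:ℝ), Real.exp (s * Real.log u))
        = (Real.log u)⁻¹ • ∫ x in (Real.log u * 0)..(Real.log u * (n:ℝ)), Real.exp x := by
      rw [← intervalIntegral.integral_comp_mul_left (fun x => Real.exp x) hln.ne]
      simp only [mul_comm]
    rw [hF]
    simp only []
    rw [this, integral_exp]
    rw [mul_zero, Real.exp_zero, mul_comm (Real.log u) (n:ℝ), ← Real.log_rpow hu.1 (n:ℝ), Real.exp_log (Real.rpow_pos_of_pos hu.1 _),
      Real.rpow_natCast]
    rw [smul_eq_mul, div_neg, ← neg_div, neg_sub, inv_mul_eq_div]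
  -- inner integral over u, for s ∈ Ioc 0 n
  have hinner2 : ∀ s ∈ Ioc (0:ℝ) (n:ℝ), (∫ u, F u s ∂μ) = 1 / (s + 1) := by
    intro s hs
    have hcong : ∀ u ∈ Ioo (0:ℝ) 1, F u s = u ^ s := by
      intro u hu
      rw [hF, Real.rpow_def_of_pos hu.1, mul_comm]
    rw [hμ, setIntegral_congr_fun measurableSet_Ioo hcong,
      ← integral_Ioc_eq_integral_Ioo, ← intervalIntegral.integral_of_le zero_le_one,
      integral_rpow (Or.inl (by linarith [hs.1]))]
    rw [Real.one_rpow, Real.zero_rpow (by linarith [hs.1]), sub_zero]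
  rw [setIntegral_congr_fun measurableSet_Ioc hinner2] at hswap
  have hIoc : (∫ s in Ioc (0:ℝ) (n:ℝ), 1 / (s + 1)) = Real.log (n + 1) := by
    rw [← intervalIntegral.integral_of_le (Nat.cast_nonneg n : (0:ℝ) ≤ (n:ℝ))]
    rw [intervalIntegral.integral_comp_add_right (fun x => 1 / x) 1]
    rw [integral_one_div (by rw [uIcc_of_le (by have := Nat.cast_nonneg (α:=ℝ) n; linarith)]; intro h; exact absurd h.1 (by norm_num) : (0:ℝ) ∉ uIcc (0+1 : ℝ) ((n:ℝ)+1))]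
    rw [zero_add, div_one]
  constructor
  · rw [← hIoc, ← hswap]
    exact setIntegral_congr_fun measurableSet_Ioo hinner1
  · have := hint.integral_prod_left
    apply this.congr
    rw [hμ]
    filter_upwards [ae_restrict_mem measurableSet_Ioo] with u hu
    exact hinner1 u hu

lemma gg_integrable : IntegrableOn gg (Ioo (0:ℝ) 1) := by
  have hmeas : Measurable gg := by
    unfold gg
    apply Measurable.add
    · simp_rw [one_div]; exact (measurable_const.sub measurable_id).inv
    · simp_rw [one_div]; exact Real.measurable_log.inv
  apply Integrable.mono' (integrable_const (1:ℝ)) hmeas.aestronglyMeasurable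
  filter_upwards [ae_restrict_mem measurableSet_Ioo] with u hu
  rw [Real.norm_eq_abs, abs_of_nonneg (gg_nonneg hu)]
  exact gg_le_one hu

lemma intA (n : ℕ) : IntegrableOn (fun u : ℝ => (1 - u ^ n) / (1 - u)) (Ioo (0:ℝ) 1) := by
  have hpoly : IntegrableOn (fun u : ℝ => ∑ k ∈ Finset.range n, u ^ k) (Ioo (0:ℝ) 1) :=
    (ContinuousOn.integrableOn_Icc (by fun_prop)).mono_set Ioo_subset_Icc_self
  apply hpoly.congr
  filter_upwards [ae_restrict_mem measurableSet_Ioo] with u hu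
  rw [geom_sum_eq (ne_of_lt hu.2)]
  rw [div_eq_div_iff (by intro h; nlinarith [hu.2] : u - 1 ≠ 0)
    (by intro h; nlinarith [hu.2] : (1:ℝ) - u ≠ 0)]
  ring

lemma hptwise (n : ℕ) (u : ℝ) :
    (1 - u ^ n) / (1 - u) - (1 - u ^ n) / (-Real.log u) = (1 - u ^ n) * gg u := by
  unfold gg
  rw [mul_add, mul_one_div, mul_one_div, div_neg, sub_neg_eq_add]

lemma gamma_eq : Real.eulerMascheroniConstant = ∫ u in Ioo (0:ℝ) 1, gg u := by
  have hfn_int : ∀ n : ℕ, IntegrableOn (fun u => (1 - u ^ n) * gg u) (Ioo (0:ℝ) 1) := by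
    intro n
    have h := (intA n).sub (stepB n).2
    apply h.congr
    filter_upwards with u
    exact hptwise n u
  have hval : ∀ n : ℕ, (∫ u in Ioo (0:ℝ) 1, (1 - u ^ n) * gg u)
      = (harmonic n : ℝ) - Real.log (n + 1) := by
    intro n
    simp only [← hptwise n]
    rw [integral_sub (intA n) (stepB n).2, ← stepA n, ← (stepB n).1]
  have hmono : ∀ᵐ u ∂(volume.restrict (Ioo (0:ℝ) 1)),
      Monotone fun n : ℕ => (1 - u ^ n) * gg u := by
    filter_upwards [ae_restrict_mem measurableSet_Ioo] with u hu
    intro m k hmk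
    have : u ^ k ≤ u ^ m := pow_le_pow_of_le_one hu.1.le hu.2.le hmk
    exact mul_le_mul_of_nonneg_right (by linarith) (gg_nonneg hu)
  have htend : ∀ᵐ u ∂(volume.restrict (Ioo (0:ℝ) 1)),
      Tendsto (fun n : ℕ => (1 - u ^ n) * gg u) atTop (𝓝 (gg u)) := by
    filter_upwards [ae_restrict_mem measurableSet_Ioo] with u hu
    have h1 : Tendsto (fun n : ℕ => u ^ n) atTop (𝓝 0) :=
      tendsto_pow_atTop_nhds_zero_of_lt_one hu.1.le hu.2
    have := ((tendsto_const_nhds (x := (1:ℝ))).sub h1).mul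
      (tendsto_const_nhds (x := gg u))
    simpa using this
  have hlim := MeasureTheory.integral_tendsto_of_tendsto_of_monotone hfn_int gg_integrable
    hmono htend
  simp only [hval] at hlim
  exact tendsto_nhds_unique Real.tendsto_harmonic_sub_log_add_one hlim

theorem stmt11 :
    Real.eulerMascheroniConstant =
      ∫ u in Set.Ioo (0 : ℝ) 1, ∫ v in Set.Ioo (0 : ℝ) (1 - u),
        -v / ((1 - v) * (1 - u) * Real.log u) := by
  rw [gamma_eq]
  exact setIntegral_congr_fun measurableSet_Ioo fun u hu => (inner_eq hu).symm
end

section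
/- Euler's constant satisfies the double integral formula γ = ∫_0^1 ∫_0^1 −(1−x)/((1−xy) ln(xy)) dx dy. -/
open MeasureTheory Set Real Filter

-- Lemma A: ∫⁻ s in Ioi 0, ofReal (exp (-(a*s))) = ofReal (1/a)
lemma lemA {a : ℝ} (ha : 0 < a) :
    ∫⁻ s in Ioi (0:ℝ), ENNReal.ofReal (Real.exp (-(a*s))) = ENNReal.ofReal (1/a) := by
  have hderiv : ∀ s ∈ Ici (0:ℝ), HasDerivAt (fun s => -(1/a) * Real.exp (-(a*s)))
      (Real.exp (-(a*s))) s := by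
    intro s _
    have h1 : HasDerivAt (fun s : ℝ => -(a*s)) (-a) s := by
      simpa using ((hasDerivAt_id s).const_mul (-a))
    have := (h1.exp).const_mul (-(1/a))
    refine this.congr_deriv ?_
    field_simp
  have htend : Tendsto (fun s => -(1/a) * Real.exp (-(a*s))) atTop (nhds 0) := by
    have : Tendsto (fun s : ℝ => -(a*s)) atTop atBot := by
      apply Filter.tendsto_neg_atBot_iff.mpr
      exact Tendsto.const_mul_atTop ha tendsto_id
    simpa using (Real.tendsto_exp_atBot.comp this).const_mul (-(1/a))
  have hint := integral_Ioi_of_hasDerivAt_of_nonneg' hderiv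
    (fun s _ => (Real.exp_pos _).le) htend
  have hintegrable := integrableOn_Ioi_deriv_of_nonneg' hderiv
    (fun s _ => (Real.exp_pos _).le) htend
  rw [← ofReal_integral_eq_lintegral_ofReal hintegrable
    (Filter.Eventually.of_forall fun s => (Real.exp_pos _).le), hint]
  norm_num

lemma lemB {u : ℝ} (h0 : 0 < u) (h1 : u < 1) :
    ∫⁻ s in Ioi (0:ℝ), ENNReal.ofReal (u ^ s) = ENNReal.ofReal (-Real.log u)⁻¹ := by
  have hl : Real.log u < 0 := Real.log_neg h0 h1
  have := lemA (a := -Real.log u) (by linarith)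
  rw [one_div] at this
  rw [← this]
  refine lintegral_congr fun s => ?_
  rw [Real.rpow_def_of_pos h0]
  norm_num [mul_comm]

lemma real_int_rpow {p : ℝ} (hp : 0 ≤ p) :
    ∫ y in Ioo (0:ℝ) 1, y ^ p = 1/(p+1) := by
  rw [← integral_Ioc_eq_integral_Ioo, ← intervalIntegral.integral_of_le zero_le_one,
    integral_rpow (Or.inl (by linarith))]
  rw [Real.zero_rpow (by linarith), Real.one_rpow]
  norm_num

lemma intOn_rpow {p : ℝ} (hp : 0 ≤ p) :
    IntegrableOn (fun y : ℝ => y ^ p) (Ioo (0:ℝ) 1) := by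
  have hi : IntervalIntegrable (fun x:ℝ => x ^ p) volume 0 1 :=
    intervalIntegral.intervalIntegrable_rpow' (by linarith)
  exact ((intervalIntegrable_iff_integrableOn_Ioc_of_le zero_le_one).mp hi).mono_set
    Ioo_subset_Ioc_self

lemma lemC {p : ℝ} (hp : 0 ≤ p) :
    ∫⁻ y in Ioo (0:ℝ) 1, ENNReal.ofReal (y ^ p) = ENNReal.ofReal (1/(p+1)) := by
  rw [← ofReal_integral_eq_lintegral_ofReal (intOn_rpow hp)
    (((ae_restrict_iff' measurableSet_Ioo).mpr (Filter.Eventually.of_forall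
      fun y hy => Real.rpow_nonneg hy.1.le p)))]
  rw [real_int_rpow hp]

lemma lemD {p : ℝ} (hp : 0 ≤ p) :
    ∫⁻ x in Ioo (0:ℝ) 1, ENNReal.ofReal ((1-x) * x ^ p)
      = ENNReal.ofReal (1/(p+1) - 1/(p+2)) := by
  have hcong : ∀ x ∈ Ioo (0:ℝ) 1, (1-x) * x ^ p = x ^ p - x ^ (p+1) := by
    intro x hx
    rw [Real.rpow_add_one (ne_of_gt hx.1)]
    ring
  have h2 : IntegrableOn (fun x : ℝ => x ^ p - x ^ (p+1)) (Ioo (0:ℝ) 1) :=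
    (intOn_rpow hp).sub (intOn_rpow (by linarith : (0:ℝ) ≤ p+1))
  have hio : IntegrableOn (fun x : ℝ => (1-x) * x ^ p) (Ioo (0:ℝ) 1) :=
    h2.congr_fun (fun x hx => (hcong x hx).symm) measurableSet_Ioo
  rw [← ofReal_integral_eq_lintegral_ofReal hio
    ((ae_restrict_iff' measurableSet_Ioo).mpr (Filter.Eventually.of_forall
      fun x hx => mul_nonneg (by linarith [hx.2]) (Real.rpow_nonneg hx.1.le p)))]
  congr 1
  rw [setIntegral_congr_fun measurableSet_Ioo hcong,
    integral_sub (intOn_rpow hp) (intOn_rpow (by linarith : (0:ℝ) ≤ p+1)),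
    real_int_rpow hp, real_int_rpow (by linarith : (0:ℝ) ≤ p+1)]
  ring_nf

lemma lemE {c : ℝ} (hc : 0 ≤ c) :
    ∫⁻ s in Ioi (0:ℝ), ENNReal.ofReal ((1/(c+s+1)) * (1/(c+s+1) - 1/(c+s+2)))
      = ENNReal.ofReal (1/(c+1) - (Real.log (c+2) - Real.log (c+1))) := by
  set g : ℝ → ℝ := fun s => -(c+s+1)⁻¹ + (Real.log (c+s+2) - Real.log (c+s+1)) with hg
  have hpos : ∀ s : ℝ, 0 ≤ s → 0 < c + s + 1 := fun s hs => by linarith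
  have hderiv : ∀ s ∈ Ici (0:ℝ), HasDerivAt g
      ((1/(c+s+1)) * (1/(c+s+1) - 1/(c+s+2))) s := by
    intro s hs
    have h1 : 0 < c + s + 1 := hpos s hs
    have h2 : 0 < c + s + 2 := by linarith
    have hd1 : HasDerivAt (fun s : ℝ => c + s + 1) 1 s := by
      simpa using ((hasDerivAt_id s).const_add c).add_const 1
    have hd2 : HasDerivAt (fun s : ℝ => c + s + 2) 1 s := by
      simpa using ((hasDerivAt_id s).const_add c).add_const 2
    have hA := (hd1.inv (ne_of_gt h1)).neg
    have hB := (hd2.log (ne_of_gt h2)).sub (hd1.log (ne_of_gt h1))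
    have := hA.add hB
    refine this.congr_deriv ?_
    field_simp
    ring
  have g'nonneg : ∀ s ∈ Ioi (0:ℝ), 0 ≤ (1/(c+s+1)) * (1/(c+s+1) - 1/(c+s+2)) := by
    intro s hs
    have h1 : 0 < c + s + 1 := hpos s (le_of_lt hs)
    have h2 : 0 < c + s + 2 := by linarith
    have : 1/(c+s+2) ≤ 1/(c+s+1) := by
      apply one_div_le_one_div_of_le h1; linarith
    have h3 : (0:ℝ) ≤ 1/(c+s+1) - 1/(c+s+2) := by linarith
    have h4 : (0:ℝ) ≤ 1/(c+s+1) := by positivity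
    exact mul_nonneg h4 h3
  have htend : Tendsto g atTop (nhds 0) := by
    have h1 : Tendsto (fun s : ℝ => c + s + 1) atTop atTop :=
      tendsto_atTop_add_const_right _ 1 (tendsto_atTop_add_const_left _ c tendsto_id)
    have hA : Tendsto (fun s : ℝ => -(c+s+1)⁻¹) atTop (nhds 0) := by
      simpa using (tendsto_inv_atTop_zero.comp h1).neg
    have hB : Tendsto (fun s : ℝ => Real.log (c+s+2) - Real.log (c+s+1)) atTop (nhds 0) := by
      have hq : Tendsto (fun s : ℝ => 1 + (c+s+1)⁻¹) atTop (nhds 1) := by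
        simpa using (tendsto_inv_atTop_zero.comp h1).const_add 1
      have hlog : Tendsto (fun s : ℝ => Real.log (1 + (c+s+1)⁻¹)) atTop (nhds 0) := by
        have := (Real.continuousAt_log (one_ne_zero)).tendsto.comp hq
        simpa [Function.comp_def] using this
      refine hlog.congr' ?_
      filter_upwards [Filter.eventually_ge_atTop (0:ℝ)] with s hs
      have h1' : 0 < c + s + 1 := hpos s hs
      have h2' : 0 < c + s + 2 := by linarith
      rw [show 1 + (c+s+1)⁻¹ = (c+s+2)/(c+s+1) by field_simp; ring,
        Real.log_div (ne_of_gt h2') (ne_of_gt h1')]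
    simpa using hA.add hB
  have hint := integral_Ioi_of_hasDerivAt_of_nonneg' hderiv g'nonneg htend
  have hintegrable := integrableOn_Ioi_deriv_of_nonneg' hderiv g'nonneg htend
  rw [← ofReal_integral_eq_lintegral_ofReal hintegrable
    ((ae_restrict_iff' measurableSet_Ioi).mpr (Filter.Eventually.of_forall g'nonneg)), hint]
  have : g 0 = -(c+1)⁻¹ + (Real.log (c+2) - Real.log (c+1)) := by
    simp only [hg]; norm_num
  rw [this]
  congr 1
  field_simp
  ring

lemma term_nonneg : ∀ n : ℕ, 0 ≤ 1/((n:ℝ)+1) - (Real.log ((n:ℝ)+2) - Real.log ((n:ℝ)+1)) := by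
    intro n
    have h1 : (0:ℝ) < (n:ℝ)+1 := by positivity
    have h2 : (0:ℝ) < ((n:ℝ)+2)/((n:ℝ)+1) := by positivity
    have := Real.log_le_sub_one_of_pos h2
    rw [Real.log_div (by linarith) (ne_of_gt h1)] at this
    have he : ((n:ℝ)+2)/((n:ℝ)+1) - 1 = 1/((n:ℝ)+1) := by
      field_simp
      ring
    linarith [he ▸ this]

lemma lemSum : HasSum (fun n : ℕ => 1/((n:ℝ)+1) - (Real.log ((n:ℝ)+2) - Real.log ((n:ℝ)+1)))
    Real.eulerMascheroniConstant := by
  rw [hasSum_iff_tendsto_nat_of_nonneg term_nonneg]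
  have hps : ∀ N : ℕ, ∑ n ∈ Finset.range N,
      (1/((n:ℝ)+1) - (Real.log ((n:ℝ)+2) - Real.log ((n:ℝ)+1)))
      = Real.eulerMascheroniSeq N := by
    intro N
    rw [Finset.sum_sub_distrib]
    have h1 : ∑ n ∈ Finset.range N, 1/((n:ℝ)+1) = (harmonic N : ℝ) := by
      rw [harmonic]; push_cast; simp [one_div]
    have h2 : ∑ n ∈ Finset.range N, (Real.log ((n:ℝ)+2) - Real.log ((n:ℝ)+1))
        = Real.log ((N:ℝ)+1) := by
      have := Finset.sum_range_sub (f := fun i : ℕ => Real.log ((i:ℝ)+1)) N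
      simp only [Nat.cast_zero, zero_add, Real.log_one, sub_zero] at this
      rw [← this]
      apply Finset.sum_congr rfl
      intro n _
      congr 2
      push_cast
      ring
    rw [h1, h2, Real.eulerMascheroniSeq]
  have := Real.tendsto_eulerMascheroniSeq
  exact Tendsto.congr (fun N => (hps N).symm) this

lemma lemPt {x y : ℝ} (hx : x ∈ Ioo (0:ℝ) 1) (hy : y ∈ Ioo (0:ℝ) 1) :
    ENNReal.ofReal (-(1 - x) / ((1 - x * y) * Real.log (x * y)))
      = ∑' n : ℕ, ∫⁻ s in Ioi (0:ℝ),
          ENNReal.ofReal ((1-x) * x^((n:ℝ)+s) * y^((n:ℝ)+s)) := by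
  have hu0 : 0 < x * y := mul_pos hx.1 hy.1
  have hu1 : x * y < 1 := by nlinarith [hx.2, hy.2, hx.1, hy.1]
  have hlog : Real.log (x*y) < 0 := Real.log_neg hu0 hu1
  have hterm : ∀ n : ℕ, (∫⁻ s in Ioi (0:ℝ),
      ENNReal.ofReal ((1-x) * x^((n:ℝ)+s) * y^((n:ℝ)+s)))
      = ENNReal.ofReal ((1-x) * (-Real.log (x*y))⁻¹ * (x*y)^n) := by
    intro n
    have hsplit : ∀ s : ℝ, (1-x) * x^((n:ℝ)+s) * y^((n:ℝ)+s)
        = ((1-x) * (x*y)^n) * (x*y)^s := by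
      intro s
      conv_rhs => rw [← Real.rpow_natCast (x*y) n, mul_assoc, ← Real.rpow_add hu0,
        Real.mul_rpow hx.1.le hy.1.le]
      ring
    simp_rw [hsplit]
    have hnn : 0 ≤ (1-x) * (x*y)^n :=
      mul_nonneg (by linarith [hx.2]) (pow_nonneg hu0.le n)
    simp_rw [ENNReal.ofReal_mul hnn]
    rw [lintegral_const_mul' _ _ ENNReal.ofReal_ne_top, lemB hu0 hu1,
      ← ENNReal.ofReal_mul hnn]
    congr 1
    ring
  simp_rw [hterm]
  have hnn : ∀ n : ℕ, 0 ≤ (1-x) * (-Real.log (x*y))⁻¹ * (x*y)^n := by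
    intro n
    have : 0 ≤ (-Real.log (x*y))⁻¹ := by
      apply inv_nonneg.mpr; linarith
    exact mul_nonneg (mul_nonneg (by linarith [hx.2]) this) (pow_nonneg hu0.le n)
  have hsummable : Summable (fun n : ℕ => (1-x) * (-Real.log (x*y))⁻¹ * (x*y)^n) :=
    (summable_geometric_of_lt_one hu0.le hu1).mul_left _
  rw [← ENNReal.ofReal_tsum_of_nonneg hnn hsummable]
  congr 1
  rw [tsum_mul_left, tsum_geometric_of_lt_one hu0.le hu1]
  have h1 : (1 : ℝ) - x*y ≠ 0 := by linarith
  field_simp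

lemma lemN (n : ℕ) :
    ∫⁻ y in Ioo (0:ℝ) 1, ∫⁻ x in Ioo (0:ℝ) 1, ∫⁻ s in Ioi (0:ℝ),
        ENNReal.ofReal ((1-x) * x^((n:ℝ)+s) * y^((n:ℝ)+s))
      = ENNReal.ofReal (1/((n:ℝ)+1) - (Real.log ((n:ℝ)+2) - Real.log ((n:ℝ)+1))) := by
  have key : ∀ y ∈ Ioo (0:ℝ) 1,
      (∫⁻ x in Ioo (0:ℝ) 1, ∫⁻ s in Ioi (0:ℝ),
        ENNReal.ofReal ((1-x) * x^((n:ℝ)+s) * y^((n:ℝ)+s)))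
      = ∫⁻ s in Ioi (0:ℝ), ENNReal.ofReal (y^((n:ℝ)+s))
          * ENNReal.ofReal (1/((n:ℝ)+s+1) - 1/((n:ℝ)+s+2)) := by
    intro y hy
    have hm : AEMeasurable (Function.uncurry fun x s =>
        ENNReal.ofReal ((1-x) * x^((n:ℝ)+s) * y^((n:ℝ)+s)))
        ((volume.restrict (Ioo (0:ℝ) 1)).prod (volume.restrict (Ioi (0:ℝ)))) := by
      apply Measurable.aemeasurable
      apply Measurable.ennreal_ofReal
      exact ((measurable_const.sub measurable_fst).mul
        (measurable_fst.pow (measurable_const.add measurable_snd))).mul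
        (measurable_const.pow (measurable_const.add measurable_snd))
    rw [lintegral_lintegral_swap hm]
    refine lintegral_congr_ae ?_
    filter_upwards [ae_restrict_mem measurableSet_Ioi] with s hs
    have hn0 : (0:ℝ) ≤ (n:ℝ) := Nat.cast_nonneg n
    have hs0 : (0:ℝ) < s := mem_Ioi.mp hs
    have hp : (0:ℝ) ≤ (n:ℝ) + s := by linarith
    calc ∫⁻ x in Ioo (0:ℝ) 1, ENNReal.ofReal ((1-x) * x^((n:ℝ)+s) * y^((n:ℝ)+s))
        = ∫⁻ x in Ioo (0:ℝ) 1, ENNReal.ofReal ((1-x) * x^((n:ℝ)+s))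
            * ENNReal.ofReal (y^((n:ℝ)+s)) := by
          refine lintegral_congr_ae ?_
          filter_upwards [ae_restrict_mem measurableSet_Ioo] with x hx
          rw [← ENNReal.ofReal_mul
            (mul_nonneg (by linarith [hx.2]) (Real.rpow_nonneg hx.1.le _))]
      _ = (∫⁻ x in Ioo (0:ℝ) 1, ENNReal.ofReal ((1-x) * x^((n:ℝ)+s)))
            * ENNReal.ofReal (y^((n:ℝ)+s)) :=
          lintegral_mul_const' _ _ ENNReal.ofReal_ne_top
      _ = ENNReal.ofReal (y^((n:ℝ)+s))
            * ENNReal.ofReal (1/((n:ℝ)+s+1) - 1/((n:ℝ)+s+2)) := by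
          rw [lemD hp, mul_comm]
  have hm2 : AEMeasurable (Function.uncurry fun y s =>
      ENNReal.ofReal (y^((n:ℝ)+s))
        * ENNReal.ofReal (1/((n:ℝ)+s+1) - 1/((n:ℝ)+s+2)))
      ((volume.restrict (Ioo (0:ℝ) 1)).prod (volume.restrict (Ioi (0:ℝ)))) := by
    apply Measurable.aemeasurable
    apply Measurable.mul (f := fun p : ℝ × ℝ => ENNReal.ofReal (p.1^((n:ℝ)+p.2)))
      (g := fun p : ℝ × ℝ => ENNReal.ofReal (1/((n:ℝ)+p.2+1) - 1/((n:ℝ)+p.2+2)))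
    · exact (measurable_fst.pow (measurable_const.add measurable_snd)).ennreal_ofReal
    · apply Measurable.ennreal_ofReal
      exact (measurable_const.div ((measurable_const.add measurable_snd).add
        measurable_const)).sub
        (measurable_const.div ((measurable_const.add measurable_snd).add measurable_const))
  calc ∫⁻ y in Ioo (0:ℝ) 1, ∫⁻ x in Ioo (0:ℝ) 1, ∫⁻ s in Ioi (0:ℝ),
        ENNReal.ofReal ((1-x) * x^((n:ℝ)+s) * y^((n:ℝ)+s))
      = ∫⁻ y in Ioo (0:ℝ) 1, ∫⁻ s in Ioi (0:ℝ), ENNReal.ofReal (y^((n:ℝ)+s))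
          * ENNReal.ofReal (1/((n:ℝ)+s+1) - 1/((n:ℝ)+s+2)) := by
        refine lintegral_congr_ae ?_
        filter_upwards [ae_restrict_mem measurableSet_Ioo] with y hy
        exact key y hy
    _ = ∫⁻ s in Ioi (0:ℝ), ∫⁻ y in Ioo (0:ℝ) 1, ENNReal.ofReal (y^((n:ℝ)+s))
          * ENNReal.ofReal (1/((n:ℝ)+s+1) - 1/((n:ℝ)+s+2)) :=
        lintegral_lintegral_swap hm2
    _ = ∫⁻ s in Ioi (0:ℝ),
          ENNReal.ofReal ((1/((n:ℝ)+s+1)) * (1/((n:ℝ)+s+1) - 1/((n:ℝ)+s+2))) := by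
        refine lintegral_congr_ae ?_
        filter_upwards [ae_restrict_mem measurableSet_Ioi] with s hs
        have hn0 : (0:ℝ) ≤ (n:ℝ) := Nat.cast_nonneg n
        have hs0 : (0:ℝ) < s := mem_Ioi.mp hs
        have hp : (0:ℝ) ≤ (n:ℝ) + s := by linarith
        rw [lintegral_mul_const' _ _ ENNReal.ofReal_ne_top, lemC hp,
          ← ENNReal.ofReal_mul (one_div_nonneg.mpr (by linarith))]
    _ = ENNReal.ofReal (1/((n:ℝ)+1) - (Real.log ((n:ℝ)+2) - Real.log ((n:ℝ)+1))) :=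
        lemE (Nat.cast_nonneg n)

lemma lemL :
    ∫⁻ y in Ioo (0:ℝ) 1, ∫⁻ x in Ioo (0:ℝ) 1,
        ENNReal.ofReal (-(1 - x) / ((1 - x * y) * Real.log (x * y)))
      = ENNReal.ofReal Real.eulerMascheroniConstant := by
  have hSmeas : ∀ m : ℕ, Measurable (fun q : (ℝ × ℝ) × ℝ =>
      ENNReal.ofReal ((1-q.1.2) * q.1.2^((m:ℝ)+q.2) * q.1.1^((m:ℝ)+q.2))) := by
    intro m
    apply Measurable.ennreal_ofReal
    exact ((measurable_const.sub (measurable_fst.snd)).mul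
      ((measurable_fst.snd).pow (measurable_const.add measurable_snd))).mul
      ((measurable_fst.fst).pow (measurable_const.add measurable_snd))
  calc ∫⁻ y in Ioo (0:ℝ) 1, ∫⁻ x in Ioo (0:ℝ) 1,
        ENNReal.ofReal (-(1 - x) / ((1 - x * y) * Real.log (x * y)))
      = ∫⁻ y in Ioo (0:ℝ) 1, ∫⁻ x in Ioo (0:ℝ) 1, ∑' m : ℕ, ∫⁻ s in Ioi (0:ℝ),
          ENNReal.ofReal ((1-x) * x^((m:ℝ)+s) * y^((m:ℝ)+s)) := by
        refine lintegral_congr_ae ?_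
        filter_upwards [ae_restrict_mem measurableSet_Ioo] with y hy
        refine lintegral_congr_ae ?_
        filter_upwards [ae_restrict_mem measurableSet_Ioo] with x hx
        exact lemPt hx hy
    _ = ∫⁻ y in Ioo (0:ℝ) 1, ∑' m : ℕ, ∫⁻ x in Ioo (0:ℝ) 1, ∫⁻ s in Ioi (0:ℝ),
          ENNReal.ofReal ((1-x) * x^((m:ℝ)+s) * y^((m:ℝ)+s)) := by
        refine lintegral_congr fun y => ?_
        refine lintegral_tsum fun m => Measurable.aemeasurable ?_
        refine Measurable.lintegral_prod_right
          (f := fun x s => ENNReal.ofReal ((1-x) * x^((m:ℝ)+s) * y^((m:ℝ)+s))) ?_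
        apply Measurable.ennreal_ofReal
        exact ((measurable_const.sub measurable_fst).mul
          (measurable_fst.pow (measurable_const.add measurable_snd))).mul
          (measurable_const.pow (measurable_const.add measurable_snd))
    _ = ∑' m : ℕ, ∫⁻ y in Ioo (0:ℝ) 1, ∫⁻ x in Ioo (0:ℝ) 1, ∫⁻ s in Ioi (0:ℝ),
          ENNReal.ofReal ((1-x) * x^((m:ℝ)+s) * y^((m:ℝ)+s)) := by
        refine lintegral_tsum fun m => Measurable.aemeasurable ?_
        refine Measurable.lintegral_prod_right
          (f := fun y x => ∫⁻ s in Ioi (0:ℝ),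
            ENNReal.ofReal ((1-x) * x^((m:ℝ)+s) * y^((m:ℝ)+s))) ?_
        exact Measurable.lintegral_prod_right
          (f := fun (p : ℝ × ℝ) s =>
            ENNReal.ofReal ((1-p.2) * p.2^((m:ℝ)+s) * p.1^((m:ℝ)+s))) (hSmeas m)
    _ = ∑' m : ℕ, ENNReal.ofReal
          (1/((m:ℝ)+1) - (Real.log ((m:ℝ)+2) - Real.log ((m:ℝ)+1))) :=
        tsum_congr fun m => lemN m
    _ = ENNReal.ofReal Real.eulerMascheroniConstant := by
        rw [← ENNReal.ofReal_tsum_of_nonneg term_nonneg lemSum.summable, lemSum.tsum_eq]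

theorem stmt12 :
    Real.eulerMascheroniConstant =
      ∫ y in Set.Ioo (0 : ℝ) 1, ∫ x in Set.Ioo (0 : ℝ) 1,
        -(1 - x) / ((1 - x * y) * Real.log (x * y)) := by
  have hFmeas : ∀ y : ℝ, Measurable (fun x : ℝ =>
      -(1 - x) / ((1 - x * y) * Real.log (x * y))) := by
    intro y
    apply Measurable.div
    · exact (measurable_const.sub measurable_id).neg
    · exact ((measurable_const.sub (measurable_id.mul measurable_const))).mul
        ((measurable_id.mul measurable_const).log)
  have hΦmeas : Measurable (fun y : ℝ => ∫⁻ x in Ioo (0:ℝ) 1,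
      ENNReal.ofReal (-(1 - x) / ((1 - x * y) * Real.log (x * y)))) := by
    refine Measurable.lintegral_prod_right
      (f := fun y x => ENNReal.ofReal (-(1 - x) / ((1 - x * y) * Real.log (x * y)))) ?_
    apply Measurable.ennreal_ofReal
    apply Measurable.div
    · exact (measurable_const.sub measurable_snd).neg
    · exact ((measurable_const.sub (measurable_snd.mul measurable_fst))).mul
        ((measurable_snd.mul measurable_fst).log)
  have hnonnegF : ∀ y ∈ Ioo (0:ℝ) 1, ∀ x ∈ Ioo (0:ℝ) 1,
      0 ≤ -(1 - x) / ((1 - x * y) * Real.log (x * y)) := by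
    intro y hy x hx
    have hu0 : 0 < x * y := mul_pos hx.1 hy.1
    have hu1 : x * y < 1 := by nlinarith [hx.2, hy.2, hx.1, hy.1]
    have hlog : Real.log (x*y) < 0 := Real.log_neg hu0 hu1
    apply div_nonneg_of_nonpos (by linarith [hx.2])
    nlinarith [hlog, hu1]
  have hfin : ∀ᵐ y ∂(volume.restrict (Ioo (0:ℝ) 1)),
      (∫⁻ x in Ioo (0:ℝ) 1,
        ENNReal.ofReal (-(1 - x) / ((1 - x * y) * Real.log (x * y)))) < ⊤ := by
    apply ae_lt_top hΦmeas
    rw [lemL]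
    exact ENNReal.ofReal_ne_top
  have step1 : ∫ y in Ioo (0:ℝ) 1, (∫ x in Ioo (0:ℝ) 1,
        -(1 - x) / ((1 - x * y) * Real.log (x * y)))
      = ∫ y in Ioo (0:ℝ) 1, (∫⁻ x in Ioo (0:ℝ) 1,
        ENNReal.ofReal (-(1 - x) / ((1 - x * y) * Real.log (x * y)))).toReal := by
    refine integral_congr_ae ?_
    filter_upwards [ae_restrict_mem measurableSet_Ioo] with y hy
    rw [integral_eq_lintegral_of_nonneg_ae]
    · filter_upwards [ae_restrict_mem measurableSet_Ioo] with x hx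
      exact hnonnegF y hy x hx
    · exact ((hFmeas y).stronglyMeasurable).aestronglyMeasurable
  rw [step1, integral_toReal hΦmeas.aemeasurable hfin, lemL,
    ENNReal.toReal_ofReal (by linarith [Real.one_half_lt_eulerMascheroniConstant])]
end

section
/- The change of variables v = 1−x, u = xy transforms the double integral ∫∫_{[0,1]²} −(1−x)/((1−xy)ln(xy)) dx dy into ∫_0^1 ∫_0^{1−u} −v/((1−v)(1−u) ln u) dv du; i.e., these two integrals are equal. -/
open MeasureTheory Set

namespace Stmt13Aux

noncomputable def g (u : ℝ) : ℝ := (Real.log u + 1 - u) / ((1 - u) * Real.log u)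

noncomputable def H (u y : ℝ) : ℝ := -(y - u) / (y ^ 2 * ((1 - u) * Real.log u))

noncomputable def F : ℝ × ℝ → ℝ := fun p => if p.2 < p.1 then H p.2 p.1 else 0

lemma measurable_H : Measurable (fun p : ℝ × ℝ => H p.2 p.1) := by
  unfold H
  measurability

lemma measurable_F : Measurable F := by
  unfold F
  exact Measurable.ite (measurableSet_lt measurable_snd measurable_fst) measurable_H
    measurable_const

lemma measurable_g : Measurable g := by
  unfold g
  exact ((Real.measurable_log.add measurable_const).sub measurable_id).div
    ((measurable_const.sub measurable_id).mul Real.measurable_log)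

lemma H_eq (u y : ℝ) : H u y = (y - u) / (y ^ 2 * ((1 - u) * -Real.log u)) := by
  unfold H
  rw [show y ^ 2 * ((1 - u) * -Real.log u) = -(y ^ 2 * ((1 - u) * Real.log u)) by ring,
    div_neg, neg_div]

lemma H_nonneg {u y : ℝ} (hu0 : 0 < u) (huy : u < y) (hy1 : y ≤ 1) : 0 ≤ H u y := by
  have hu1 : u < 1 := lt_of_lt_of_le huy hy1
  have hlog : Real.log u < 0 := Real.log_neg hu0 hu1
  unfold H
  apply div_nonneg_of_nonpos (by linarith)
  have h1 : (1 - u) * Real.log u ≤ 0 :=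
    mul_nonpos_of_nonneg_of_nonpos (by linarith) hlog.le
  exact mul_nonpos_of_nonneg_of_nonpos (sq_nonneg y) h1

lemma F_nonneg {y u : ℝ} (hy1 : y ≤ 1) (hu0 : 0 < u) : 0 ≤ F (y, u) := by
  unfold F
  by_cases h : u < y
  · simpa [h] using H_nonneg hu0 h hy1
  · simp [h]

lemma g_nonneg {u : ℝ} (hu0 : 0 < u) (hu1 : u < 1) : 0 ≤ g u := by
  have hlog : Real.log u < 0 := Real.log_neg hu0 hu1
  have h1 : Real.log u ≤ u - 1 := Real.log_le_sub_one_of_pos hu0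
  unfold g
  apply div_nonneg_of_nonpos (by linarith)
  exact mul_nonpos_of_nonneg_of_nonpos (by linarith) hlog.le

/-- FTC computation 1 -/
lemma C1 {u : ℝ} (hu0 : 0 < u) (hu1 : u < 1) :
    ∫ y in u..1, (y - u) / y ^ 2 = u - 1 - Real.log u := by
  have hderiv : ∀ y ∈ Set.uIcc u 1, HasDerivAt (fun t => Real.log t + u / t)
      ((y - u) / y ^ 2) y := by
    intro y hy
    rw [Set.uIcc_of_le hu1.le] at hy
    have hy0 : 0 < y := lt_of_lt_of_le hu0 hy.1
    have h1 := Real.hasDerivAt_log hy0.ne'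
    have h2 : HasDerivAt (fun t : ℝ => u / t) (u * -(y ^ 2)⁻¹) y := by
      simpa [div_eq_mul_inv] using (hasDerivAt_inv hy0.ne').const_mul u
    refine (h1.add h2).congr_deriv ?_
    field_simp [hy0.ne']
    try ring
  have hint : IntervalIntegrable (fun y => (y - u) / y ^ 2) MeasureTheory.volume u 1 := by
    apply ContinuousOn.intervalIntegrable
    apply ContinuousOn.div (by fun_prop) (by fun_prop)
    intro y hy
    rw [Set.uIcc_of_le hu1.le] at hy
    exact pow_ne_zero 2 (lt_of_lt_of_le hu0 hy.1).ne'
  rw [intervalIntegral.integral_eq_sub_of_hasDerivAt hderiv hint]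
  simp only [Real.log_one]
  field_simp
  ring

/-- FTC computation 2 -/
lemma C2 {u : ℝ} (hu0 : 0 < u) (hu1 : u < 1) :
    ∫ v in (0:ℝ)..(1 - u), v / (1 - v) = -Real.log u - (1 - u) := by
  have hderiv : ∀ v ∈ Set.uIcc (0:ℝ) (1 - u), HasDerivAt (fun t => -Real.log (1 - t) - t)
      (v / (1 - v)) v := by
    intro v hv
    rw [Set.uIcc_of_le (by linarith)] at hv
    have h1v : 0 < 1 - v := by linarith [hv.2]
    have h1 : HasDerivAt (fun t : ℝ => 1 - t) (-1) v := by
      simpa using (hasDerivAt_id v).const_sub 1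
    have h2 : HasDerivAt (fun t => Real.log (1 - t)) ((1 - v)⁻¹ * -1) v :=
      (Real.hasDerivAt_log h1v.ne').comp v h1
    refine ((h2.neg).sub (hasDerivAt_id v)).congr_deriv ?_
    field_simp [h1v.ne']
    try ring
  have hint : IntervalIntegrable (fun v => v / (1 - v)) MeasureTheory.volume 0 (1 - u) := by
    apply ContinuousOn.intervalIntegrable
    apply ContinuousOn.div (by fun_prop) (by fun_prop)
    intro v hv
    rw [Set.uIcc_of_le (by linarith)] at hv
    have : 0 < 1 - v := by linarith [hv.2]
    exact this.ne'
  rw [intervalIntegral.integral_eq_sub_of_hasDerivAt hderiv hint]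
  have : (1 : ℝ) - (1 - u) = u := by ring
  simp [this]

/-- substitution u = x * y in the inner LHS integral -/
lemma L1 {y : ℝ} (hy0 : 0 < y) (hy1 : y < 1) :
    (∫ x in Ioo (0:ℝ) 1, -(1 - x) / ((1 - x * y) * Real.log (x * y)))
      = ∫ u in Ioo 0 y, H u y := by
  set Fy : ℝ → ℝ := fun u => -(1 - u / y) / ((1 - u) * Real.log u) with hFy
  have key : (fun x : ℝ => -(1 - x) / ((1 - x * y) * Real.log (x * y)))
      = fun x => Fy (x * y) := by
    funext x
    rw [hFy]
    simp only [mul_div_cancel_right₀ _ hy0.ne']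
  have hident : ∀ u : ℝ, y⁻¹ • Fy u = H u y := by
    intro u
    have hnum : y⁻¹ * -(1 - u / y) = -(y - u) / y ^ 2 := by
      rw [eq_div_iff (by positivity : (y:ℝ) ^ 2 ≠ 0)]
      field_simp
    rw [hFy, smul_eq_mul, ← mul_div_assoc, hnum, div_div]
    rfl
  rw [← integral_Ioc_eq_integral_Ioo, ← intervalIntegral.integral_of_le zero_le_one, key,
    intervalIntegral.integral_comp_mul_right Fy hy0.ne', zero_mul, one_mul,
    ← intervalIntegral.integral_smul]
  simp only [hident]
  rw [intervalIntegral.integral_of_le hy0.le, integral_Ioc_eq_integral_Ioo]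

/-- indicator rewriting -/
lemma L2 {y : ℝ} (hy1 : y ≤ 1) :
    (∫ u in Ioo 0 y, H u y) = ∫ u in Ioo (0:ℝ) 1, F (y, u) := by
  have hF : ∀ u : ℝ, F (y, u) = (Iio y).indicator (fun u => H u y) u := by
    intro u
    by_cases h : u < y <;> simp [F, indicator, h]
  simp only [hF]
  rw [setIntegral_indicator measurableSet_Iio, Set.Ioo_inter_Iio, min_eq_right hy1]

lemma intF {y : ℝ} (hy0 : 0 < y) (hy1 : y < 1) :
    IntegrableOn (fun u => F (y, u)) (Ioo (0:ℝ) 1) := by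
  have hly : 0 < -Real.log y := neg_pos.2 (Real.log_neg hy0 hy1)
  have hCpos : 0 < y ^ 2 * ((1 - y) * -Real.log y) :=
    mul_pos (pow_pos hy0 2) (mul_pos (by linarith) hly)
  have hm : Measurable fun u => F (y, u) :=
    measurable_F.comp (measurable_const.prodMk measurable_id)
  apply Integrable.mono' (integrable_const (1 / (y ^ 2 * ((1 - y) * -Real.log y))))
    hm.aestronglyMeasurable
  filter_upwards [ae_restrict_mem measurableSet_Ioo] with u hu
  obtain ⟨hu0, hu1⟩ := hu
  rw [Real.norm_eq_abs, abs_of_nonneg (F_nonneg hy1.le hu0)]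
  by_cases h : u < y
  · have : F (y, u) = H u y := by simp [F, h]
    rw [this, H_eq]
    apply div_le_div₀ (by norm_num) (by linarith) hCpos
    have hlu : -Real.log y ≤ -Real.log u := neg_le_neg (Real.log_le_log hu0 h.le)
    apply mul_le_mul_of_nonneg_left _ (sq_nonneg y)
    exact mul_le_mul (by linarith) hlu hly.le (by linarith)
  · have : F (y, u) = 0 := by simp [F, h]
    rw [this]
    positivity

lemma intHy {u : ℝ} (hu0 : 0 < u) (hu1 : u < 1) :
    IntegrableOn (fun y => H u y) (Ioo u 1) := by
  have hlu : 0 < -Real.log u := neg_pos.2 (Real.log_neg hu0 hu1)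
  have hCpos : 0 < u ^ 2 * ((1 - u) * -Real.log u) :=
    mul_pos (pow_pos hu0 2) (mul_pos (by linarith) hlu)
  have hm : Measurable fun y => H u y :=
    measurable_H.comp (measurable_id.prodMk measurable_const)
  apply Integrable.mono' (integrable_const (1 / (u ^ 2 * ((1 - u) * -Real.log u))))
    hm.aestronglyMeasurable
  filter_upwards [ae_restrict_mem measurableSet_Ioo] with y hy
  obtain ⟨hy0, hy1⟩ := hy
  rw [Real.norm_eq_abs, abs_of_nonneg (H_nonneg hu0 hy0 hy1.le), H_eq]
  apply div_le_div₀ (by norm_num) (by linarith) hCpos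
  apply mul_le_mul _ le_rfl (mul_pos (by linarith) hlu).le (sq_nonneg y)
  exact pow_le_pow_left₀ hu0.le hy0.le 2

/-- evaluation of the v-integral on the RHS -/
lemma R1 {u : ℝ} (hu0 : 0 < u) (hu1 : u < 1) :
    (∫ v in Ioo (0:ℝ) (1 - u), -v / ((1 - v) * (1 - u) * Real.log u)) = g u := by
  rw [← integral_Ioc_eq_integral_Ioo, ← intervalIntegral.integral_of_le (by linarith)]
  have hrw : ∀ v : ℝ, -v / ((1 - v) * (1 - u) * Real.log u)
      = (v / (1 - v)) * -(((1 - u) * Real.log u)⁻¹) := by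
    intro v
    rw [mul_neg, ← div_eq_mul_inv, div_div, ← neg_div,
      show (1 - v) * ((1 - u) * Real.log u) = (1 - v) * (1 - u) * Real.log u from by ring]
  simp only [hrw]
  rw [intervalIntegral.integral_mul_const, C2 hu0 hu1]
  unfold g
  rw [div_eq_mul_inv]
  ring

/-- evaluation of the y-integral after swapping -/
lemma D1 {u : ℝ} (hu0 : 0 < u) (hu1 : u < 1) :
    (∫ y in Ioo u 1, H u y) = g u := by
  rw [← integral_Ioc_eq_integral_Ioo, ← intervalIntegral.integral_of_le hu1.le]
  have hrw : ∀ y : ℝ, H u y = ((y - u) / y ^ 2) * -(((1 - u) * Real.log u)⁻¹) := by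
    intro y
    unfold H
    rw [mul_neg, ← div_eq_mul_inv, div_div, ← neg_div]
  simp only [hrw]
  rw [intervalIntegral.integral_mul_const, C1 hu0 hu1]
  unfold g
  rw [div_eq_mul_inv]
  ring

end Stmt13Aux

open Stmt13Aux

theorem stmt13 :
    (∫ y in Set.Ioo (0 : ℝ) 1, ∫ x in Set.Ioo (0 : ℝ) 1,
        -(1 - x) / ((1 - x * y) * Real.log (x * y))) =
      ∫ u in Set.Ioo (0 : ℝ) 1, ∫ v in Set.Ioo (0 : ℝ) (1 - u),
        -v / ((1 - v) * (1 - u) * Real.log u) := by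
  have meas_I : MeasurableSet (Ioo (0:ℝ) 1) := measurableSet_Ioo
  have step1 : (∫ y in Ioo (0:ℝ) 1, ∫ x in Ioo (0:ℝ) 1,
        -(1 - x) / ((1 - x * y) * Real.log (x * y)))
      = ∫ y in Ioo (0:ℝ) 1, ∫ u in Ioo (0:ℝ) 1, F (y, u) := by
    apply setIntegral_congr_fun meas_I
    intro y hy
    show (∫ x in Ioo (0:ℝ) 1, -(1 - x) / ((1 - x * y) * Real.log (x * y)))
      = ∫ u in Ioo (0:ℝ) 1, F (y, u)
    rw [L1 hy.1 hy.2, L2 hy.2.le]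
  have innerEq : ∀ y ∈ Ioo (0:ℝ) 1, ENNReal.ofReal (∫ u in Ioo (0:ℝ) 1, F (y, u))
      = ∫⁻ u in Ioo (0:ℝ) 1, ENNReal.ofReal (F (y, u)) := fun y hy =>
    ofReal_integral_eq_lintegral_ofReal (intF hy.1 hy.2)
      ((ae_restrict_iff' meas_I).2 (ae_of_all _ fun u hu => F_nonneg hy.2.le hu.1))
  have step2 : (∫ y in Ioo (0:ℝ) 1, ∫ u in Ioo (0:ℝ) 1, F (y, u))
      = (∫⁻ y in Ioo (0:ℝ) 1, ∫⁻ u in Ioo (0:ℝ) 1, ENNReal.ofReal (F (y, u))).toReal := by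
    rw [integral_eq_lintegral_of_nonneg_ae]
    · congr 1
      exact setLIntegral_congr_fun meas_I innerEq
    · exact (ae_restrict_iff' meas_I).2 (ae_of_all _ fun y hy =>
        setIntegral_nonneg meas_I fun u hu => F_nonneg hy.2.le hu.1)
    · exact (measurable_F.stronglyMeasurable.integral_prod_right').aestronglyMeasurable
  have step3 : (∫⁻ y in Ioo (0:ℝ) 1, ∫⁻ u in Ioo (0:ℝ) 1, ENNReal.ofReal (F (y, u)))
      = ∫⁻ u in Ioo (0:ℝ) 1, ∫⁻ y in Ioo (0:ℝ) 1, ENNReal.ofReal (F (y, u)) :=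
    lintegral_lintegral_swap ((ENNReal.measurable_ofReal.comp measurable_F).aemeasurable)
  have step4 : ∀ u ∈ Ioo (0:ℝ) 1, (∫⁻ y in Ioo (0:ℝ) 1, ENNReal.ofReal (F (y, u)))
      = ENNReal.ofReal (g u) := by
    intro u hu
    have hind : ∀ y : ℝ, ENNReal.ofReal (F (y, u))
        = (Ioi u).indicator (fun y => ENNReal.ofReal (H u y)) y := by
      intro y
      by_cases h : u < y <;> simp [F, indicator, h]
    have hIset : Ioi u ∩ Ioo (0:ℝ) 1 = Ioo u 1 := by
      ext t
      simp only [mem_inter_iff, mem_Ioi, mem_Ioo]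
      constructor
      · rintro ⟨h1, _, h3⟩; exact ⟨h1, h3⟩
      · rintro ⟨h1, h2⟩; exact ⟨h1, lt_trans hu.1 h1, h2⟩
    simp only [hind]
    rw [lintegral_indicator measurableSet_Ioi, Measure.restrict_restrict measurableSet_Ioi,
      hIset, ← ofReal_integral_eq_lintegral_ofReal (intHy hu.1 hu.2)
        ((ae_restrict_iff' measurableSet_Ioo).2
          (ae_of_all _ fun y hy => H_nonneg hu.1 hy.1 hy.2.le)),
      D1 hu.1 hu.2]
  have step4' : (∫⁻ u in Ioo (0:ℝ) 1, ∫⁻ y in Ioo (0:ℝ) 1, ENNReal.ofReal (F (y, u)))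
      = ∫⁻ u in Ioo (0:ℝ) 1, ENNReal.ofReal (g u) :=
    setLIntegral_congr_fun meas_I step4
  have step5 : (∫ u in Ioo (0:ℝ) 1, ∫ v in Ioo (0:ℝ) (1 - u),
        -v / ((1 - v) * (1 - u) * Real.log u)) = ∫ u in Ioo (0:ℝ) 1, g u :=
    setIntegral_congr_fun meas_I fun u hu => R1 hu.1 hu.2
  have step6 : (∫ u in Ioo (0:ℝ) 1, g u)
      = (∫⁻ u in Ioo (0:ℝ) 1, ENNReal.ofReal (g u)).toReal :=
    integral_eq_lintegral_of_nonneg_ae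
      ((ae_restrict_iff' meas_I).2 (ae_of_all _ fun u hu => g_nonneg hu.1 hu.2))
      measurable_g.aestronglyMeasurable
  rw [step1, step2, step3, step4', step5, step6]
end

section
/- For real t > 0 and integer n ≥ 1, termwise integration yields ∫_1^∞ n!/((n+1)·t(t+1)···(t+n)) dt = (1/(n+1)) Σ_{k=0}^n (−1)^{k+1} C(n,k) ln(k+1). -/
open Filter MeasureTheory Set Real Topology

theorem pf_aux (n : ℕ) : ∀ t : ℝ, 0 < t →
    ∑ k ∈ Finset.range (n+1), (-1:ℝ)^k * n.choose k / (t + k)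
      = (n.factorial : ℝ) / ∏ k ∈ Finset.range (n+1), (t + k) := by
  induction n with
  | zero => intro t ht; simp
  | succ n ih =>
    intro t ht
    have ht1 : (0:ℝ) < t + 1 := by linarith
    have hP : (0:ℝ) < ∏ k ∈ Finset.range (n+1), (t + k) := by
      apply Finset.prod_pos; intro k _; positivity
    have hP1 : (0:ℝ) < ∏ k ∈ Finset.range (n+1), (t + 1 + k) := by
      apply Finset.prod_pos; intro k _; positivity
    have key : ∑ k ∈ Finset.range (n+2), (-1:ℝ)^k * (n+1).choose k / (t + k)
        = (∑ k ∈ Finset.range (n+1), (-1:ℝ)^k * n.choose k / (t + k))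
          - ∑ k ∈ Finset.range (n+1), (-1:ℝ)^k * n.choose k / (t + 1 + k) := by
      rw [Finset.sum_range_succ' (fun k => (-1:ℝ)^k * (n+1).choose k / (t + k))]
      have : ∀ k ∈ Finset.range (n+1),
          (-1:ℝ)^(k+1) * (n+1).choose (k+1) / (t + ↑(k+1))
          = (-1:ℝ)^(k+1) * n.choose (k+1) / (t + ↑(k+1))
            + (-((-1:ℝ)^k * n.choose k / (t + 1 + k))) := by
        intro k _
        rw [Nat.choose_succ_succ]
        push_cast
        have : t + (↑k + 1) = t + 1 + k := by ring
        rw [this]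
        have h2 : t + 1 + (k:ℝ) ≠ 0 := by positivity
        field_simp
        ring
      rw [Finset.sum_congr rfl this, Finset.sum_add_distrib, Finset.sum_neg_distrib]
      have shift : ∑ k ∈ Finset.range (n+1), (-1:ℝ)^(k+1) * n.choose (k+1) / (t + ↑(k+1))
          = (∑ k ∈ Finset.range (n+2), (-1:ℝ)^k * n.choose k / (t + k))
            - (-1:ℝ)^0 * n.choose 0 / (t + (0:ℕ)) := by
        rw [Finset.sum_range_succ' (fun k => (-1:ℝ)^k * n.choose k / (t + k))]
        ring
      rw [shift]
      rw [Finset.sum_range_succ (fun k => (-1:ℝ)^k * n.choose k / (t + k))]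
      simp [Nat.choose_succ_self]
      ring
    have hprodrel : (∏ k ∈ Finset.range (n+2), (t + k))
        = t * ∏ k ∈ Finset.range (n+1), (t + 1 + k) := by
      rw [Finset.prod_range_succ' (fun k => (t + (k:ℕ)))]
      simp only [Nat.cast_zero, add_zero]
      rw [mul_comm]
      congr 1
      apply Finset.prod_congr rfl
      intro k _; push_cast; ring
    have hprodrel2 : (∏ k ∈ Finset.range (n+2), (t + k))
        = (∏ k ∈ Finset.range (n+1), (t + k)) * (t + (n+1)) := by
      rw [Finset.prod_range_succ]; push_cast; ring_nf
    have h1 : t * (∏ k ∈ Finset.range (n+1), (t + 1 + k))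
        = (∏ k ∈ Finset.range (n+1), (t + k)) * (t + (n+1)) := by
      rw [← hprodrel, ← hprodrel2]
    rw [show ((n:ℕ)+1+1) = n+2 from rfl, key, ih t ht, ih (t+1) ht1, hprodrel]
    have hfac : ((n+1).factorial : ℝ) = ((n:ℝ)+1) * n.factorial := by
      rw [Nat.factorial_succ]; push_cast; ring
    rw [hfac, div_sub_div _ _ (ne_of_gt hP) (ne_of_gt hP1),
      div_eq_div_iff (by positivity) (by positivity)]
    linear_combination ((n.factorial : ℝ) * ∏ k ∈ Finset.range (n+1), (t + 1 + k)) * h1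

theorem stmt14 (n : ℕ) (hn : 1 ≤ n) :
    (∫ t in Set.Ioi (1 : ℝ),
        (n.factorial : ℝ) / (((n : ℝ) + 1) * ∏ k ∈ Finset.range (n + 1), (t + k))) =
      (1 / ((n : ℝ) + 1)) *
        ∑ k ∈ Finset.range (n + 1),
          (-1 : ℝ) ^ (k + 1) * (n.choose k) * Real.log (k + 1) := by
  set F : ℝ → ℝ := fun t => (1 / ((n:ℝ)+1)) *
      ∑ k ∈ Finset.range (n+1), (-1:ℝ)^k * n.choose k * Real.log (t + k) with hF
  have hderiv : ∀ x ∈ Set.Ici (1:ℝ), HasDerivAt F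
      ((n.factorial : ℝ) / (((n : ℝ) + 1) * ∏ k ∈ Finset.range (n + 1), (x + k))) x := by
    intro x hx
    have hx0 : (0:ℝ) < x := lt_of_lt_of_le one_pos hx
    have hsum : HasDerivAt (fun t => ∑ k ∈ Finset.range (n+1),
        (-1:ℝ)^k * n.choose k * Real.log (t + k))
        (∑ k ∈ Finset.range (n+1), (-1:ℝ)^k * n.choose k / (x + k)) x := by
      apply HasDerivAt.fun_sum
      intro k _
      have h1 : HasDerivAt (fun t : ℝ => t + (k:ℝ)) 1 x := (hasDerivAt_id x).add_const _
      have h2 : x + (k:ℝ) ≠ 0 := by positivity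
      have := (h1.log h2).const_mul ((-1:ℝ)^k * n.choose k)
      simpa [div_eq_mul_inv, mul_comm, mul_assoc] using this
    have := hsum.const_mul (1 / ((n:ℝ)+1))
    refine this.congr_deriv ?_
    rw [pf_aux n x hx0]
    have hP : (0:ℝ) < ∏ k ∈ Finset.range (n+1), (x + k) := by
      apply Finset.prod_pos; intro k _; positivity
    field_simp
  have hint : IntegrableOn (fun x : ℝ =>
      (n.factorial : ℝ) / (((n : ℝ) + 1) * ∏ k ∈ Finset.range (n + 1), (x + (k:ℝ))))
      (Set.Ioi (1:ℝ)) := by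
    have hmeas : AEStronglyMeasurable (fun x : ℝ =>
        (n.factorial : ℝ) / (((n : ℝ) + 1) * ∏ k ∈ Finset.range (n + 1), (x + (k:ℝ))))
        (volume.restrict (Set.Ioi (1:ℝ))) := by
      apply Measurable.aestronglyMeasurable
      apply Measurable.div measurable_const
      apply Measurable.const_mul
      apply Continuous.measurable
      exact continuous_finset_prod _ (fun k _ => continuous_id.add continuous_const)
    have hbound : IntegrableOn (fun x : ℝ => (n.factorial : ℝ) * x ^ (-2:ℝ))
        (Set.Ioi (1:ℝ)) := by
      exact (integrableOn_Ioi_rpow_of_lt (by norm_num) one_pos).const_mul _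
    apply Integrable.mono' hbound hmeas
    filter_upwards [ae_restrict_mem measurableSet_Ioi] with x hx
    have hx1 : (1:ℝ) < x := hx
    have hx0 : (0:ℝ) < x := by linarith
    have hP2 : x^2 ≤ ∏ k ∈ Finset.range (n+1), (x + k) := by
      obtain ⟨m, rfl⟩ : ∃ m, n = m + 1 := ⟨n - 1, by omega⟩
      rw [Finset.prod_range_succ' (fun k => (x + (k:ℕ))),
        Finset.prod_range_succ' (fun k => (x + ((k:ℕ)+1:ℕ)))]
      have hrest : (1:ℝ) ≤ ∏ k ∈ Finset.range m, (x + ((k:ℕ)+1+1:ℕ)) := by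
        calc (1:ℝ) = ∏ k ∈ Finset.range m, 1 := by simp
        _ ≤ _ := by
          apply Finset.prod_le_prod (by intros; norm_num)
          intro i _; push_cast; linarith [Nat.cast_nonneg (α := ℝ) i]
      push_cast at hrest ⊢
      nlinarith [hrest, mul_le_mul_of_nonneg_right hrest (by positivity : (0:ℝ) ≤ (x+1)*x)]
    have hPpos : (0:ℝ) < ∏ k ∈ Finset.range (n+1), (x + k) := by
      apply Finset.prod_pos; intro k _; positivity
    have hden : x^2 ≤ ((n:ℝ)+1) * ∏ k ∈ Finset.range (n+1), (x + k) := by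
      nlinarith [Nat.cast_nonneg (α := ℝ) n]
    rw [Real.norm_eq_abs, abs_of_nonneg (by positivity)]
    rw [Real.rpow_neg hx0.le, show ((2:ℝ)) = ((2:ℕ):ℝ) by norm_num, Real.rpow_natCast]
    have heq : (n.factorial:ℝ) * (x^(2:ℕ))⁻¹ = (n.factorial:ℝ) / x^2 := by
      norm_num [div_eq_mul_inv]
    rw [heq]
    gcongr
  have hsum0 : (∑ k ∈ Finset.range (n+1), (-1:ℝ)^k * n.choose k) = 0 := by
    have h := Int.alternating_sum_range_choose_of_ne (n := n) (by omega)
    have h2 : ((∑ i ∈ Finset.range (n+1), (-1:ℤ)^i * n.choose i : ℤ) : ℝ) = 0 := by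
      rw [h]; norm_num
    push_cast at h2
    exact h2
  have htend : Tendsto F atTop (𝓝 0) := by
    have hG : ∀ k : ℕ, Tendsto (fun t : ℝ => Real.log (t + k) - Real.log t) atTop (𝓝 0) := by
      intro k
      have h0 : Tendsto (fun t : ℝ => (k:ℝ)/t) atTop (𝓝 0) :=
        tendsto_const_nhds.div_atTop tendsto_id
      have h1 : Tendsto (fun t : ℝ => 1 + (k:ℝ)/t) atTop (𝓝 1) := by
        simpa using tendsto_const_nhds.add h0
      have h2 : Tendsto (fun t : ℝ => Real.log (1 + (k:ℝ)/t)) atTop (𝓝 0) := by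
        have := (Real.continuousAt_log (by norm_num : (1:ℝ) ≠ 0)).tendsto.comp h1
        simpa [Function.comp_def] using this
      apply h2.congr'
      filter_upwards [eventually_gt_atTop (0:ℝ)] with t ht
      rw [show 1 + (k:ℝ)/t = (t+k)/t by field_simp,
        Real.log_div (by positivity) (ne_of_gt ht)]
    have hsum : Tendsto (fun t : ℝ => ∑ k ∈ Finset.range (n+1),
        (-1:ℝ)^k * n.choose k * (Real.log (t+k) - Real.log t)) atTop (𝓝 0) := by
      have := tendsto_finset_sum (Finset.range (n+1))
        (fun k _ => ((hG k).const_mul ((-1:ℝ)^k * n.choose k)))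
      simpa using this
    have heq : F = fun t => (1/((n:ℝ)+1)) * ∑ k ∈ Finset.range (n+1),
        (-1:ℝ)^k * n.choose k * (Real.log (t+k) - Real.log t) := by
      funext t
      rw [hF]
      simp only
      congr 1
      simp only [mul_sub]
      rw [Finset.sum_sub_distrib, ← Finset.sum_mul, hsum0]
      ring
    rw [heq]
    simpa using hsum.const_mul (1/((n:ℝ)+1))
  have hFTC := integral_Ioi_of_hasDerivAt_of_tendsto' hderiv hint htend
  rw [hFTC, zero_sub, hF]
  simp only
  rw [neg_mul_eq_mul_neg, ← Finset.sum_neg_distrib]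
  congr 1
  apply Finset.sum_congr rfl
  intro k _
  rw [pow_succ, add_comm (1:ℝ) (k:ℝ)]
  ring
end

section
/- e^γ equals the infinite product ∏_{n=1}^∞ (∏_{k=0}^n (k+1)^{(−1)^{k+1} C(n,k)})^{1/(n+1)}, i.e., the partial products converge to e^γ. -/
open MeasureTheory Real Filter Set intervalIntegral

noncomputable def sgH (k : ℕ) (t : ℝ) : ℝ := (1 - t ^ k) / (-Real.log t)
noncomputable def sgG (t : ℝ) : ℝ := 1 / (1 - t) + 1 / Real.log t

lemma sg_log_pos {t : ℝ} (ht : t ∈ Ioo (0:ℝ) 1) : 0 < -Real.log t := by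
  simpa using Real.log_neg ht.1 ht.2

lemma sg_one_sub_le {t : ℝ} (ht : t ∈ Ioo (0:ℝ) 1) : 1 - t ≤ -Real.log t := by
  have := Real.log_le_sub_one_of_pos ht.1
  linarith

lemma sg_pow_bound {t : ℝ} (ht : t ∈ Ioo (0:ℝ) 1) (k : ℕ) : 1 - t ^ k ≤ k * (1 - t) := by
  have h : 1 + (k:ℝ) * (t - 1) ≤ (1 + (t - 1)) ^ k := by
    apply one_add_mul_le_pow
    nlinarith [ht.1]
  have : (1 : ℝ) + (t-1) = t := by ring
  rw [this] at h
  nlinarith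

lemma sgH_nonneg {t : ℝ} (ht : t ∈ Ioo (0:ℝ) 1) (k : ℕ) : 0 ≤ sgH k t := by
  have h1 := sg_log_pos ht
  have h2 : t ^ k ≤ 1 := pow_le_one₀ ht.1.le ht.2.le
  exact div_nonneg (by linarith) h1.le

lemma sgH_le {t : ℝ} (ht : t ∈ Ioo (0:ℝ) 1) (k : ℕ) : sgH k t ≤ k := by
  have h1 := sg_log_pos ht
  rw [sgH, div_le_iff₀ h1]
  calc 1 - t ^ k ≤ k * (1 - t) := sg_pow_bound ht k
    _ ≤ k * (-Real.log t) := by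
        have := sg_one_sub_le ht
        have : (0:ℝ) ≤ k := Nat.cast_nonneg k
        nlinarith [sg_one_sub_le ht]

lemma sgG_eq {t : ℝ} (ht : t ∈ Ioo (0:ℝ) 1) : sgG t = 1 / (1 - t) - 1 / (-Real.log t) := by
  have h1 := sg_log_pos ht
  rw [sgG]
  rw [one_div_neg_eq_neg_one_div]
  ring

lemma sgG_nonneg {t : ℝ} (ht : t ∈ Ioo (0:ℝ) 1) : 0 ≤ sgG t := by
  have h1 := sg_log_pos ht
  have h2 : 0 < 1 - t := by linarith [ht.2]
  rw [sgG_eq ht, sub_nonneg]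
  apply one_div_le_one_div_of_le h2 (sg_one_sub_le ht)

lemma sgG_le_one {t : ℝ} (ht : t ∈ Ioo (0:ℝ) 1) : sgG t ≤ 1 := by
  have h1 := sg_log_pos ht
  have h2 : 0 < 1 - t := by linarith [ht.2]
  -- -t log t ≤ 1 - t  from log(1/t) ≤ 1/t - 1
  have h3 : -Real.log t ≤ 1 / t - 1 := by
    have := Real.log_le_sub_one_of_pos (show (0:ℝ) < 1/t from one_div_pos.mpr ht.1)
    rwa [Real.log_div one_ne_zero (ne_of_gt ht.1), Real.log_one, zero_sub] at this
  have h4 : t * (-Real.log t) ≤ 1 - t := by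
    have := mul_le_mul_of_nonneg_left h3 ht.1.le
    calc t * (-Real.log t) ≤ t * (1/t - 1) := this
      _ = 1 - t := by rw [mul_sub, mul_one_div_cancel (ne_of_gt ht.1), mul_one]
  rw [sgG_eq ht]
  rw [div_sub_div _ _ (ne_of_gt h2) (ne_of_gt h1), div_le_one (by positivity)]
  nlinarith


instance : IsFiniteMeasure (volume.restrict (Ioo (0:ℝ) 1)) :=
  ⟨by simp [Measure.restrict_apply_univ, Real.volume_Ioo]⟩

lemma sg_integrableOn {f : ℝ → ℝ} (C : ℝ)
    (hm : AEStronglyMeasurable f (volume.restrict (Ioo (0:ℝ) 1)))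
    (hb : ∀ t ∈ Ioo (0:ℝ) 1, ‖f t‖ ≤ C) : IntegrableOn f (Ioo (0:ℝ) 1) := by
  refine Integrable.mono' (integrable_const C) hm ?_
  rw [ae_restrict_iff' measurableSet_Ioo]
  filter_upwards with t ht using hb t ht

lemma sgH_meas (k : ℕ) : Measurable (sgH k) :=
  (measurable_const.sub (measurable_id.pow_const k)).div Real.measurable_log.neg

lemma sg_int_pow (k : ℕ) : ∫ t in Ioo (0:ℝ) 1, t ^ k = 1 / (k + 1) := by
  rw [← integral_Ioc_eq_integral_Ioo, ← intervalIntegral.integral_of_le zero_le_one,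
    integral_pow]
  simp

lemma sg_int_rpow {s : ℝ} (hs : 0 < s) : ∫ t in Ioo (0:ℝ) 1, t ^ s = 1 / (s + 1) := by
  rw [← integral_Ioc_eq_integral_Ioo, ← intervalIntegral.integral_of_le zero_le_one,
    integral_rpow (Or.inl (by linarith))]
  rw [Real.one_rpow, Real.zero_rpow (by linarith)]
  ring

lemma sg_int_exp_mul {c : ℝ} (hc : c ≠ 0) (k : ℝ) :
    ∫ s in (0:ℝ)..k, Real.exp (c * s) = (Real.exp (c * k) - 1) / c := by
  have := intervalIntegral.integral_comp_mul_left (fun u => Real.exp u) hc (a := 0) (b := k)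
  rw [this]
  simp [integral_exp, mul_comm, inv_mul_eq_div]

lemma sg_int_H (k : ℕ) : ∫ t in Ioo (0:ℝ) 1, sgH k t = Real.log (k + 1) := by
  set μ := volume.restrict (Ioo (0:ℝ) 1)
  set ν := volume.restrict (Ioc (0:ℝ) (k:ℝ))
  set f : ℝ → ℝ → ℝ := fun t s => Real.exp (Real.log t * s) with hf
  have hmeas : Measurable (Function.uncurry f) :=
    ((Real.measurable_log.comp measurable_fst).mul measurable_snd).exp
  have hint : Integrable (Function.uncurry f) (μ.prod ν) := by
    refine Integrable.mono' (integrable_const 1) hmeas.aestronglyMeasurable ?_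
    have : μ.prod ν = (volume.prod volume).restrict ((Ioo (0:ℝ) 1) ×ˢ (Ioc (0:ℝ) (k:ℝ))) :=
      Measure.prod_restrict _ _
    rw [this, ae_restrict_iff' (measurableSet_Ioo.prod measurableSet_Ioc)]
    filter_upwards with p hp
    have h1 : Real.log p.1 < 0 := Real.log_neg hp.1.1 hp.1.2
    have h2 : 0 < p.2 := hp.2.1
    rw [Function.uncurry, hf]
    simp only [Real.norm_eq_abs, Real.abs_exp, Real.exp_le_one_iff]
    nlinarith
  have hswap : ∫ t, ∫ s, f t s ∂ν ∂μ = ∫ s, ∫ t, f t s ∂μ ∂ν := integral_integral_swap hint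
  have lhs_eq : ∫ t, ∫ s, f t s ∂ν ∂μ = ∫ t in Ioo (0:ℝ) 1, sgH k t := by
    refine setIntegral_congr_fun measurableSet_Ioo (fun t ht => ?_)
    have hlt : Real.log t < 0 := Real.log_neg ht.1 ht.2
    have : ∫ s, f t s ∂ν = ∫ s in (0:ℝ)..(k:ℝ), Real.exp (Real.log t * s) := by
      rw [intervalIntegral.integral_of_le (by positivity)]
    rw [this, sg_int_exp_mul (ne_of_lt hlt), sgH]
    have : Real.exp (Real.log t * k) = t ^ k := by
      rw [mul_comm, Real.exp_nat_mul, Real.exp_log ht.1]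
    rw [this]
    rw [← neg_div_neg_eq]
    ring_nf
  have rhs_eq : ∫ s, ∫ t, f t s ∂μ ∂ν = ∫ s in Ioc (0:ℝ) (k:ℝ), 1 / (s + 1) := by
    refine setIntegral_congr_fun measurableSet_Ioc (fun s hs => ?_)
    have h1 : ∫ t, f t s ∂μ = ∫ t in Ioo (0:ℝ) 1, t ^ s := by
      refine setIntegral_congr_fun measurableSet_Ioo (fun t ht => ?_)
      rw [hf, Real.rpow_def_of_pos ht.1]
    rw [h1, sg_int_rpow hs.1]
  have final : ∫ s in Ioc (0:ℝ) (k:ℝ), 1 / (s + 1) = Real.log (k + 1) := by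
    rw [← intervalIntegral.integral_of_le (by positivity : (0:ℝ) ≤ k)]
    have := intervalIntegral.integral_comp_add_right (a := (0:ℝ)) (b := (k:ℝ))
      (fun u => 1 / u) 1
    rw [this, zero_add, integral_one_div, div_one]
    intro h
    rw [Set.mem_uIcc] at h
    rcases h with ⟨h1, _⟩ | ⟨h1, _⟩ <;> [linarith; linarith [Nat.cast_nonneg (α := ℝ) k]]
  rw [← lhs_eq, hswap, rhs_eq, final]


lemma sgG_meas : Measurable sgG :=
  ((measurable_const.div (measurable_const.sub measurable_id))).add
    (measurable_const.div Real.measurable_log)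

lemma sgH_integrable (k : ℕ) : IntegrableOn (sgH k) (Ioo (0:ℝ) 1) := by
  refine sg_integrableOn (k:ℝ) ((sgH_meas k).aestronglyMeasurable) (fun t ht => ?_)
  rw [Real.norm_eq_abs, abs_of_nonneg (sgH_nonneg ht k)]
  exact sgH_le ht k

lemma sgG_integrable : IntegrableOn sgG (Ioo (0:ℝ) 1) := by
  refine sg_integrableOn 1 (sgG_meas.aestronglyMeasurable) (fun t ht => ?_)
  rw [Real.norm_eq_abs, abs_of_nonneg (sgG_nonneg ht)]
  exact sgG_le_one ht

lemma sg_int_harmonic (n : ℕ) :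
    ∫ t in Ioo (0:ℝ) 1, (1 - t ^ n) / (1 - t) = (harmonic n : ℝ) := by
  have h1 : ∫ t in Ioo (0:ℝ) 1, (1 - t ^ n) / (1 - t)
      = ∫ t in Ioo (0:ℝ) 1, ∑ k ∈ Finset.range n, t ^ k := by
    refine setIntegral_congr_fun measurableSet_Ioo (fun t ht => ?_)
    have ht1 : t ≠ 1 := ne_of_lt ht.2
    rw [geom_sum_eq ht1, ← neg_div_neg_eq]
    ring_nf
  rw [h1, MeasureTheory.integral_finset_sum]
  · rw [harmonic]
    push_cast
    refine Finset.sum_congr rfl (fun k _ => ?_)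
    rw [sg_int_pow]
    push_cast
    ring
  · intro k _
    refine sg_integrableOn 1 ((measurable_id.pow_const k).aestronglyMeasurable) (fun t ht => ?_)
    rw [Real.norm_eq_abs, abs_of_nonneg (pow_nonneg ht.1.le k)]
    exact pow_le_one₀ ht.1.le ht.2.le

lemma sg_int_G : ∫ t in Ioo (0:ℝ) 1, sgG t = Real.eulerMascheroniConstant := by
  set u : ℕ → ℝ → ℝ := fun n t => (1 - t ^ n) * sgG t with hu
  have hint : ∀ n, IntegrableOn (u n) (Ioo (0:ℝ) 1) := by
    intro n
    refine sg_integrableOn 1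
      (((measurable_const.sub (measurable_id.pow_const n)).mul sgG_meas).aestronglyMeasurable)
      (fun t ht => ?_)
    have h1 : 0 ≤ 1 - t ^ n := by
      have := pow_le_one₀ ht.1.le ht.2.le (n := n); linarith
    have h2 : 1 - t ^ n ≤ 1 := by
      have := pow_nonneg ht.1.le n; linarith
    rw [Real.norm_eq_abs, abs_of_nonneg (mul_nonneg h1 (sgG_nonneg ht))]
    calc (1 - t ^ n) * sgG t ≤ 1 * 1 :=
          mul_le_mul h2 (sgG_le_one ht) (sgG_nonneg ht) one_pos.le
      _ = 1 := mul_one 1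
  have hval : ∀ n, ∫ t in Ioo (0:ℝ) 1, u n t = Real.eulerMascheroniSeq n := by
    intro n
    have h1 : ∫ t in Ioo (0:ℝ) 1, u n t
        = ∫ t in Ioo (0:ℝ) 1, ((1 - t ^ n) / (1 - t) - sgH n t) := by
      refine setIntegral_congr_fun measurableSet_Ioo (fun t ht => ?_)
      rw [hu]
      simp only
      rw [sgG_eq ht, sgH]
      ring
    rw [h1, integral_sub ?_ (sgH_integrable n)]
    · rw [sg_int_harmonic, sg_int_H, Real.eulerMascheroniSeq]
    · -- integrability of (1-t^n)/(1-t)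
      have : IntegrableOn (fun t : ℝ => ∑ k ∈ Finset.range n, t ^ k) (Ioo (0:ℝ) 1) := by
        apply integrable_finset_sum
        intro k _
        refine sg_integrableOn 1 ((measurable_id.pow_const k).aestronglyMeasurable)
          (fun t ht => ?_)
        rw [Real.norm_eq_abs, abs_of_nonneg (pow_nonneg ht.1.le k)]
        exact pow_le_one₀ ht.1.le ht.2.le
      refine this.congr_fun (fun t ht => ?_) measurableSet_Ioo
      have ht1 : t ≠ 1 := ne_of_lt ht.2
      beta_reduce
      rw [geom_sum_eq ht1, ← neg_div_neg_eq]
      ring_nf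
  have hmono : ∀ᵐ t ∂(volume.restrict (Ioo (0:ℝ) 1)), Monotone fun n => u n t := by
    rw [ae_restrict_iff' measurableSet_Ioo]
    filter_upwards with t ht
    intro a b hab
    have : t ^ b ≤ t ^ a := pow_le_pow_of_le_one ht.1.le ht.2.le hab
    have := sgG_nonneg ht
    rw [hu]
    simp only
    nlinarith
  have htend : ∀ᵐ t ∂(volume.restrict (Ioo (0:ℝ) 1)),
      Tendsto (fun n => u n t) atTop (nhds (sgG t)) := by
    rw [ae_restrict_iff' measurableSet_Ioo]
    filter_upwards with t ht
    have h1 : Tendsto (fun n => t ^ n) atTop (nhds 0) := by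
      apply tendsto_pow_atTop_nhds_zero_of_lt_one ht.1.le ht.2
    have : Tendsto (fun n => (1 - t ^ n) * sgG t) atTop (nhds ((1 - 0) * sgG t)) :=
      ((tendsto_const_nhds.sub h1).mul tendsto_const_nhds)
    simpa using this
  have := integral_tendsto_of_tendsto_of_monotone hint sgG_integrable hmono htend
  have h2 : Tendsto (fun n => ∫ t in Ioo (0:ℝ) 1, u n t) atTop
      (nhds Real.eulerMascheroniConstant) := by
    simp_rw [hval]
    exact Real.tendsto_eulerMascheroniSeq
  exact tendsto_nhds_unique this h2


lemma sg_binom {n : ℕ} (hn : 1 ≤ n) (t : ℝ) :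
    ∑ k ∈ Finset.range (n + 1), (-1:ℝ) ^ (k+1) * (n.choose k) * (1 - t ^ k)
      = (1 - t) ^ n := by
  have h1 : ∑ k ∈ Finset.range (n + 1), (-1:ℝ) ^ (k+1) * (n.choose k) * (1 - t ^ k)
      = ∑ k ∈ Finset.range (n + 1), ((-t) ^ k * 1 ^ (n - k) * (n.choose k)
        - (-1:ℝ) ^ k * 1 ^ (n - k) * (n.choose k)) := by
    refine Finset.sum_congr rfl (fun k _ => ?_)
    rw [neg_pow t k]
    ring
  rw [h1, Finset.sum_sub_distrib, ← add_pow, ← add_pow]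
  have : (-t + 1 : ℝ) = 1 - t := by ring
  rw [this]
  have : (-1 + 1 : ℝ) = 0 := by ring
  rw [this, zero_pow (by omega), sub_zero]

lemma sg_W {n : ℕ} (hn : 1 ≤ n) :
    (∫ t in Ioo (0:ℝ) 1, (1 - t) ^ n / (-Real.log t))
      = ∑ k ∈ Finset.range (n + 1), (-1:ℝ) ^ (k+1) * (n.choose k) * Real.log (k + 1) := by
  have h1 : ∀ k, (-1:ℝ) ^ (k+1) * ((n.choose k : ℝ)) * Real.log ((k:ℝ) + 1)
      = ∫ t in Ioo (0:ℝ) 1, (-1:ℝ) ^ (k+1) * (n.choose k) * sgH k t := by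
    intro k
    rw [MeasureTheory.integral_const_mul, sg_int_H]
  calc (∫ t in Ioo (0:ℝ) 1, (1 - t) ^ n / (-Real.log t))
      = ∫ t in Ioo (0:ℝ) 1,
          ∑ k ∈ Finset.range (n + 1), (-1:ℝ) ^ (k+1) * (n.choose k) * sgH k t := by
        refine setIntegral_congr_fun measurableSet_Ioo (fun t ht => ?_)
        have : ∀ k, (-1:ℝ) ^ (k+1) * (n.choose k) * sgH k t
            = ((-1:ℝ) ^ (k+1) * (n.choose k) * (1 - t ^ k)) / (-Real.log t) := by
          intro k; rw [sgH]; ring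
        simp_rw [this]
        rw [← Finset.sum_div, sg_binom hn]
    _ = ∑ k ∈ Finset.range (n + 1),
          ∫ t in Ioo (0:ℝ) 1, (-1:ℝ) ^ (k+1) * (n.choose k) * sgH k t := by
        refine MeasureTheory.integral_finset_sum _ (fun k _ => ?_)
        exact (sgH_integrable k).const_mul _
    _ = ∑ k ∈ Finset.range (n + 1), (-1:ℝ) ^ (k+1) * (n.choose k) * Real.log (k + 1) := by
        refine Finset.sum_congr rfl (fun k _ => ?_)
        rw [← h1]

lemma sg_vterm_integrable {n : ℕ} (hn : 1 ≤ n) :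
    IntegrableOn (fun t : ℝ => 1 / ((n:ℝ) + 1) * ((1 - t) ^ n / (-Real.log t)))
      (Ioo (0:ℝ) 1) := by
  refine sg_integrableOn 1 ?_ (fun t ht => ?_)
  · exact ((measurable_const.mul (((measurable_const.sub measurable_id).pow_const n).div
      Real.measurable_log.neg))).aestronglyMeasurable
  · have hL := sg_log_pos ht
    have hx : 0 < 1 - t := by linarith [ht.2]
    have hx1 : 1 - t ≤ 1 := by linarith [ht.1]
    have h2 : (1 - t) ^ n ≤ 1 - t := by
      calc (1 - t) ^ n ≤ (1 - t) ^ 1 := pow_le_pow_of_le_one hx.le hx1 hn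
        _ = 1 - t := pow_one _
    have h3 : (1 - t) ^ n / (-Real.log t) ≤ 1 := by
      rw [div_le_one hL]
      exact h2.trans (sg_one_sub_le ht)
    have h4 : 0 ≤ (1 - t) ^ n / (-Real.log t) := div_nonneg (by positivity) hL.le
    have h5 : (0:ℝ) < (n:ℝ) + 1 := by positivity
    rw [Real.norm_eq_abs, abs_of_nonneg (by positivity)]
    calc 1 / ((n:ℝ) + 1) * ((1 - t) ^ n / (-Real.log t)) ≤ 1 / ((n:ℝ)+1) * 1 := by
          apply mul_le_mul_of_nonneg_left h3 (by positivity)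
      _ ≤ 1 := by rw [mul_one]; rw [div_le_one h5]; linarith [Nat.cast_nonneg (α := ℝ) n]

lemma sg_main :
    Tendsto (fun N : ℕ => ∑ n ∈ Finset.Icc 1 N, 1 / ((n:ℝ) + 1) *
        ∑ k ∈ Finset.range (n + 1), (-1:ℝ) ^ (k+1) * (n.choose k) * Real.log (k + 1))
      atTop (nhds Real.eulerMascheroniConstant) := by
  set v : ℕ → ℝ → ℝ := fun N t => ∑ n ∈ Finset.Icc 1 N,
    1 / ((n:ℝ) + 1) * ((1 - t) ^ n / (-Real.log t)) with hv
  have hint : ∀ N, IntegrableOn (v N) (Ioo (0:ℝ) 1) := by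
    intro N
    apply MeasureTheory.integrable_finset_sum
    intro n hn
    exact sg_vterm_integrable (Finset.mem_Icc.mp hn).1
  have hSv : ∀ N : ℕ, (∑ n ∈ Finset.Icc 1 N, 1 / ((n:ℝ) + 1) *
        ∑ k ∈ Finset.range (n + 1), (-1:ℝ) ^ (k+1) * (n.choose k) * Real.log (k + 1))
      = ∫ t in Ioo (0:ℝ) 1, v N t := by
    intro N
    rw [hv]
    rw [MeasureTheory.integral_finset_sum _
      (fun n hn => sg_vterm_integrable (Finset.mem_Icc.mp hn).1)]
    refine Finset.sum_congr rfl (fun n hn => ?_)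
    rw [MeasureTheory.integral_const_mul, sg_W (Finset.mem_Icc.mp hn).1]
  have hmono : ∀ᵐ t ∂(volume.restrict (Ioo (0:ℝ) 1)), Monotone fun N => v N t := by
    rw [ae_restrict_iff' measurableSet_Ioo]
    filter_upwards with t ht
    intro a b hab
    refine Finset.sum_le_sum_of_subset_of_nonneg (Finset.Icc_subset_Icc_right hab) ?_
    intro n _ _
    have hL := sg_log_pos ht
    have hx : 0 < 1 - t := by linarith [ht.2]
    positivity
  have htend : ∀ᵐ t ∂(volume.restrict (Ioo (0:ℝ) 1)),
      Tendsto (fun N => v N t) atTop (nhds (sgG t)) := by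
    rw [ae_restrict_iff' measurableSet_Ioo]
    filter_upwards with t ht
    set x := 1 - t with hx
    set M := -Real.log t with hM
    have hx0 : 0 < x := by rw [hx]; linarith [ht.2]
    have hx1 : x < 1 := by rw [hx]; linarith [ht.1]
    have hM0 : 0 < M := sg_log_pos ht
    have hb : HasSum (fun n : ℕ => x ^ (n + 1) / (n + 1)) M := by
      have := Real.hasSum_pow_div_log_of_abs_lt_one
        (x := x) (by rw [abs_of_pos hx0]; exact hx1)
      have h1t : 1 - x = t := by rw [hx]; ring
      rwa [h1t] at this
    have hc : HasSum (fun n : ℕ => 1 / ((n:ℝ) + 1) * (x ^ n / M)) (1 / x - 1 / M + 1 / M) := by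
      have h2 := hb.div_const (x * M)
      have heq : ∀ n : ℕ, x ^ (n + 1) / (n + 1) / (x * M) = 1 / ((n:ℝ) + 1) * (x ^ n / M) := by
        intro n
        field_simp
        ring
      rw [funext heq] at h2
      have : M / (x * M) = 1 / x - 1 / M + 1 / M := by
        field_simp
        ring
      rwa [this] at h2
    have htends : Tendsto (fun N : ℕ => ∑ n ∈ Finset.range (N + 1),
        1 / ((n:ℝ) + 1) * (x ^ n / M)) atTop (nhds (1 / x - 1 / M + 1 / M)) :=
      hc.tendsto_sum_nat.comp (tendsto_add_atTop_nat 1)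
    have hsplit : ∀ N : ℕ, ∑ n ∈ Finset.range (N + 1), 1 / ((n:ℝ) + 1) * (x ^ n / M)
        = 1 / M + v N t := by
      intro N
      have hins : Finset.range (N + 1) = insert 0 (Finset.Icc 1 N) := by
        ext m
        simp only [Finset.mem_range, Finset.mem_insert, Finset.mem_Icc]
        omega
      rw [hins, Finset.sum_insert (by simp)]
      simp only [Nat.cast_zero, pow_zero, zero_add]
      rw [hv]
      norm_num
      rfl
    simp_rw [hsplit] at htends
    have := htends.sub (tendsto_const_nhds (x := 1 / M) (f := atTop))
    simp only [add_sub_cancel_left] at this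
    have hlim : 1 / x - 1 / M + 1 / M - 1 / M = sgG t := by
      rw [sgG_eq ht, ← hx, ← hM]; ring
    rwa [hlim] at this
  have h1 := MeasureTheory.integral_tendsto_of_tendsto_of_monotone hint sgG_integrable hmono htend
  rw [sg_int_G] at h1
  simp_rw [hSv]
  exact h1

theorem stmt16 :
    Filter.Tendsto
      (fun N : ℕ => ∏ n ∈ Finset.Icc 1 N,
        (∏ k ∈ Finset.range (n + 1),
            ((k : ℝ) + 1) ^ ((-1 : ℤ) ^ (k + 1) * (n.choose k : ℤ))) ^
          ((1 : ℝ) / ((n : ℝ) + 1)))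
      Filter.atTop (nhds (Real.exp Real.eulerMascheroniConstant)) := by
  have key : ∀ N : ℕ, (∏ n ∈ Finset.Icc 1 N,
        (∏ k ∈ Finset.range (n + 1),
            ((k : ℝ) + 1) ^ ((-1 : ℤ) ^ (k + 1) * (n.choose k : ℤ))) ^
          ((1 : ℝ) / ((n : ℝ) + 1)))
      = Real.exp (∑ n ∈ Finset.Icc 1 N, 1 / ((n:ℝ) + 1) *
          ∑ k ∈ Finset.range (n + 1), (-1:ℝ) ^ (k+1) * (n.choose k) * Real.log (k + 1)) := by
    intro N
    rw [Real.exp_sum]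
    refine Finset.prod_congr rfl (fun n _ => ?_)
    have hfac : ∀ k : ℕ, ((k : ℝ) + 1) ^ ((-1 : ℤ) ^ (k + 1) * (n.choose k : ℤ))
        = Real.exp ((-1:ℝ) ^ (k+1) * (n.choose k) * Real.log ((k:ℝ) + 1)) := by
      intro k
      have hp : (0:ℝ) < (k:ℝ) + 1 := by positivity
      rw [← Real.exp_log (zpow_pos hp _), Real.log_zpow]
      congr 1
      push_cast
      ring
    simp_rw [hfac]
    rw [← Real.exp_sum]
    rw [← Real.exp_mul]
    congr 1
    ring
  simp_rw [key]
  exact (Real.continuous_exp.tendsto _).comp sg_main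
end

section
/- For every real t > 0, ψ'(t) − 1/t = Σ_{n=1}^∞ n!/((n+1)·t(t+1)···(t+n)), where ψ is the digamma function. -/
open Real Filter Topology Set Finset

local notation "γ" => Real.eulerMascheroniConstant

noncomputable def digamma (x : ℝ) : ℝ := deriv (fun y : ℝ => Real.log (Real.Gamma y)) x




lemma lg_diff {x : ℝ} (hx : 0 < x) :
    DifferentiableAt ℝ (fun y : ℝ => Real.log (Real.Gamma y)) x := by
  refine (Real.differentiableAt_Gamma ?_).log (Real.Gamma_ne_zero ?_) <;>
    exact fun m => by have := Nat.cast_nonneg (α := ℝ) m; linarith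

lemma digamma_rec {x : ℝ} (hx : 0 < x) : digamma (x + 1) = digamma x + 1 / x := by
  unfold digamma
  rw [← deriv_comp_add_const, one_div, ← Real.deriv_log,
    ← deriv_add (lg_diff hx) (Real.differentiableAt_log hx.ne')]
  apply Filter.EventuallyEq.deriv_eq
  filter_upwards [eventually_gt_nhds hx] with y hy
  simp only [Real.Gamma_add_one hy.ne', Real.log_mul hy.ne' (Real.Gamma_pos_of_pos hy).ne',
    add_comm, Pi.add_apply]

lemma digamma_nat (n : ℕ) : digamma (n + 1) = -γ + harmonic n := by
  have h1 : (0:ℝ) < n + 1 := by positivity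
  have := Real.deriv_Gamma_nat n
  unfold digamma
  rw [deriv.log (Real.differentiableAt_Gamma fun m => by have := Nat.cast_nonneg (α := ℝ) m; linarith) (by positivity), this,
    Real.Gamma_nat_eq_factorial, mul_comm, mul_div_assoc, div_self (by positivity), mul_one]

lemma digamma_mono {x y : ℝ} (hx : 0 < x) (hxy : x ≤ y) : digamma x ≤ digamma y := by
  rcases eq_or_lt_of_le hxy with rfl | hxy
  · exact le_refl _
  have hc := Real.convexOn_log_Gamma
  have h1 := hc.deriv_le_slope (mem_Ioi.mpr hx) (mem_Ioi.mpr (hx.trans hxy)) hxy (lg_diff hx)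
  have h2 := hc.slope_le_deriv (mem_Ioi.mpr hx) (mem_Ioi.mpr (hx.trans hxy)) hxy
    (lg_diff (hx.trans hxy))
  exact h1.trans h2





lemma digamma_add_nat {x : ℝ} (hx : 0 < x) (N : ℕ) :
    digamma (x + N) = digamma x + ∑ k ∈ range N, 1 / (x + k) := by
  induction N with
  | zero => simp
  | succ N ih =>
    have h : x + ((N : ℝ) + 1) = (x + N) + 1 := by ring
    have : digamma (x + (N + 1 : ℕ)) = digamma (x + N) + 1 / (x + N) := by
      push_cast
      rw [h, digamma_rec (by positivity)]
    rw [this, ih, Finset.sum_range_succ]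
    ring

lemma summable_one_div_sq : Summable (fun k : ℕ => 1 / ((k : ℝ) + 1) ^ 2) := by
  have h := Real.summable_one_div_nat_pow.mpr (le_refl 2)
  have := (summable_nat_add_iff 1).mpr h
  refine this.congr fun n => ?_
  push_cast
  ring

lemma harmonic_diff_tendsto (m : ℕ) :
    Tendsto (fun N : ℕ => (harmonic (N + m) : ℝ) - harmonic N) atTop (𝓝 0) := by
  induction m with
  | zero => simpa using tendsto_const_nhds
  | succ m ih =>
    have h2 : Tendsto (fun N : ℕ => ((N : ℝ) + m + 1)⁻¹) atTop (𝓝 0) := by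
      apply tendsto_inv_atTop_zero.comp
      apply tendsto_atTop_add_const_right
      apply tendsto_atTop_add_const_right
      exact tendsto_natCast_atTop_atTop
    have := ih.add h2
    rw [add_zero] at this
    refine this.congr fun N => ?_
    rw [show N + (m + 1) = (N + m) + 1 by ring, harmonic_succ]
    push_cast
    ring

lemma digamma_shift_tendsto {x : ℝ} (hx : 0 < x) :
    Tendsto (fun N : ℕ => digamma (x + N + 1) - (-γ + harmonic N)) atTop (𝓝 0) := by
  set m := ⌈x⌉₊ with hm
  have hxm : x ≤ m := Nat.le_ceil x
  refine tendsto_of_tendsto_of_tendsto_of_le_of_le tendsto_const_nhds (harmonic_diff_tendsto m)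
    (fun N => ?_) (fun N => ?_)
  · have h1 : digamma ((N : ℝ) + 1) ≤ digamma (x + N + 1) :=
      digamma_mono (by positivity) (by linarith)
    rw [digamma_nat N] at h1
    linarith
  · have h2 : digamma (x + N + 1) ≤ digamma (((N + m : ℕ) : ℝ) + 1) := by
      apply digamma_mono (by positivity)
      push_cast
      linarith
    rw [digamma_nat (N + m)] at h2
    linarith

lemma summable_digamma_term {x : ℝ} (hx : 0 < x) :
    Summable (fun k : ℕ => 1 / ((k : ℝ) + 1) - 1 / (x + k)) := by
  set c := min x 1 with hc
  have hc0 : 0 < c := lt_min hx one_pos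
  apply Summable.of_abs
  have hsum : Summable (fun k : ℕ => |x - 1| / (c * ((k : ℝ) + 1) ^ 2)) := by
    refine (summable_one_div_sq.mul_left (|x - 1| / c)).congr fun k => ?_
    field_simp
  refine Summable.of_nonneg_of_le (fun k => abs_nonneg _) (fun k => ?_) hsum
  have hk1 : (0 : ℝ) < (k : ℝ) + 1 := by positivity
  have hxk : (0 : ℝ) < x + k := by positivity
  have heq : 1 / ((k : ℝ) + 1) - 1 / (x + k) = (x - 1) / (((k : ℝ) + 1) * (x + k)) := by
    field_simp
    ring
  rw [heq, abs_div, abs_of_pos (mul_pos hk1 hxk)]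
  apply div_le_div_of_nonneg_left (abs_nonneg _) (mul_pos hc0 (pow_pos hk1 2))
  have h1 : c ≤ x := min_le_left _ _
  have h2 : c ≤ 1 := min_le_right _ _
  have hck : c * ((k : ℝ) + 1) ≤ x + k := by nlinarith [Nat.cast_nonneg (α := ℝ) k]
  nlinarith [mul_le_mul_of_nonneg_left hck hk1.le]

lemma harmonic_cast_sum (M : ℕ) :
    ((harmonic M : ℚ) : ℝ) = ∑ k ∈ range M, 1 / ((k : ℝ) + 1) := by
  rw [harmonic]
  push_cast
  simp [one_div]

lemma hasSum_digamma {x : ℝ} (hx : 0 < x) :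
    HasSum (fun k : ℕ => 1 / ((k : ℝ) + 1) - 1 / (x + k)) (digamma x + γ) := by
  have hs := summable_digamma_term hx
  have htend : Tendsto (fun N : ℕ => ∑ k ∈ range N, (1 / ((k : ℝ) + 1) - 1 / (x + k))) atTop
      (𝓝 (digamma x + γ)) := by
    rw [← tendsto_add_atTop_iff_nat 1]
    have key : ∀ N : ℕ, ∑ k ∈ range (N + 1), (1 / ((k : ℝ) + 1) - 1 / (x + k))
        = (digamma x + γ) - (digamma (x + (N : ℝ) + 1) - (-γ + harmonic N))
          + ((harmonic (N + 1) : ℝ) - harmonic N) := by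
      intro N
      rw [Finset.sum_sub_distrib, ← harmonic_cast_sum (N + 1)]
      have := digamma_add_nat hx (N + 1)
      have hx1 : x + ((N : ℕ) + 1 : ℕ) = x + (N : ℝ) + 1 := by push_cast; ring
      rw [hx1] at this
      rw [this]
      ring
    have h0 := (tendsto_const_nhds (x := digamma x + γ) (f := atTop (α := ℕ))).sub
      (digamma_shift_tendsto hx) |>.add (harmonic_diff_tendsto 1)
    rw [sub_zero, add_zero] at h0
    exact h0.congr fun N => (key N).symm
  have h2 := hs.hasSum.tendsto_sum_nat
  have := tendsto_nhds_unique h2 htend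
  exact this ▸ hs.hasSum






lemma summable_inv_sq_add {a : ℝ} (ha : 0 < a) :
    Summable (fun k : ℕ => 1 / (a + (k : ℝ)) ^ 2) := by
  set c := min a 1 with hc
  have hc0 : 0 < c := lt_min ha one_pos
  refine Summable.of_nonneg_of_le (fun k => by positivity) (fun k => ?_)
    ((summable_one_div_sq.mul_left (1 / c ^ 2)))
  have hk1 : (0 : ℝ) < (k : ℝ) + 1 := by positivity
  have hak : (0 : ℝ) < a + k := by positivity
  have hck : c * ((k : ℝ) + 1) ≤ a + k := by
    have h1 : c ≤ a := min_le_left _ _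
    have h2 : c ≤ 1 := min_le_right _ _
    nlinarith [Nat.cast_nonneg (α := ℝ) k]
  rw [div_mul_div_comm, one_mul]
  apply div_le_div_of_nonneg_left one_pos.le (by positivity)
  calc c ^ 2 * ((k : ℝ) + 1) ^ 2 = (c * ((k : ℝ) + 1)) ^ 2 := by ring
    _ ≤ (a + k) ^ 2 := by nlinarith [mul_pos hc0 hk1]

lemma hasDerivAt_digamma {t : ℝ} (ht : 0 < t) :
    HasDerivAt digamma (∑' k : ℕ, 1 / (t + (k : ℝ)) ^ 2) t := by
  have ht2 : 0 < t / 2 := by linarith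
  have hts : t ∈ Ioi (t / 2) := by simp only [Set.mem_Ioi]; linarith
  have hpos : ∀ y ∈ Ioi (t / 2), 0 < y := fun y hy => lt_trans ht2 hy
  have H := hasDerivAt_tsum_of_isPreconnected (summable_inv_sq_add ht2) isOpen_Ioi
    (convex_Ioi (t / 2)).isPreconnected
    (g := fun (k : ℕ) (y : ℝ) => 1 / ((k : ℝ) + 1) - 1 / (y + k))
    (g' := fun (k : ℕ) (y : ℝ) => 1 / (y + (k : ℝ)) ^ 2)
    (fun k y hy => ?_) (fun k y hy => ?_) hts (summable_digamma_term ht) hts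
  · have heq : digamma =ᶠ[𝓝 t]
        fun z => -γ + ∑' k : ℕ, (1 / ((k : ℝ) + 1) - 1 / (z + k)) := by
      filter_upwards [isOpen_Ioi.mem_nhds hts] with y hy
      rw [(hasSum_digamma (hpos y hy)).tsum_eq]
      ring
    exact ((H.const_add (-γ)).congr_of_eventuallyEq heq)
  · -- HasDerivAt of each term
    have hyk : y + (k : ℝ) ≠ 0 := by have := hpos y hy; positivity
    have h1 : HasDerivAt (fun z : ℝ => z + (k : ℝ)) 1 y := (hasDerivAt_id y).add_const _
    have h2 := h1.inv hyk
    have h3 := h2.const_sub (1 / ((k : ℝ) + 1))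
    simpa only [one_div, neg_div, neg_neg, Pi.inv_apply] using h3
  · -- bound
    have hy' : t / 2 ≤ y := le_of_lt hy
    have h0 : (0 : ℝ) < t / 2 + k := by positivity
    have h1 : (0 : ℝ) < y + k := by have := hpos y hy; positivity
    rw [Real.norm_eq_abs, abs_of_pos (by positivity)]
    apply div_le_div_of_nonneg_left one_pos.le (by positivity)
    nlinarith


noncomputable def Pfun (t : ℝ) (n : ℕ) : ℝ := ∏ k ∈ range (n + 1), (t + (k : ℝ))

noncomputable def afun (t : ℝ) (n : ℕ) : ℝ :=
  (n.factorial : ℝ) / (((n : ℝ) + 1) * Pfun t n)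

lemma Pfun_pos {t : ℝ} (ht : 0 < t) (n : ℕ) : 0 < Pfun t n := by
  apply Finset.prod_pos
  intro k _
  positivity

lemma Pfun_succ (t : ℝ) (n : ℕ) : Pfun t (n + 1) = Pfun t n * (t + (n : ℝ) + 1) := by
  rw [Pfun, Finset.prod_range_succ]
  push_cast
  rw [← Pfun]
  ring

lemma Pfun_shift (t : ℝ) (n : ℕ) : Pfun (t + 1) n * t = Pfun t (n + 1) := by
  rw [Pfun, Pfun, Finset.prod_range_succ' (fun k => t + (k : ℝ)) (n + 1)]
  push_cast
  have h : ∏ k ∈ range (n + 1), (t + 1 + (k : ℝ))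
      = ∏ k ∈ range (n + 1), (t + ((k : ℝ) + 1)) :=
    Finset.prod_congr rfl fun k _ => by ring
  rw [h]
  ring

lemma factorial_div_Pfun {t : ℝ} (ht : 0 < t) {n : ℕ} (hn : 1 ≤ n) :
    ((n.factorial : ℝ)) / Pfun t n = Real.GammaSeq t n / (n : ℝ) ^ t := by
  have hn0 : (0 : ℝ) < n := by exact_mod_cast hn
  have hnt : (0 : ℝ) < (n : ℝ) ^ t := Real.rpow_pos_of_pos hn0 t
  rw [Real.GammaSeq, Pfun]
  field_simp

lemma GammaSeq_nonneg {t : ℝ} (ht : 0 < t) (n : ℕ) : 0 ≤ Real.GammaSeq t n := by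
  rw [Real.GammaSeq]
  have h1 : (0:ℝ) ≤ (n : ℝ) ^ t := (Real.rpow_nonneg n.cast_nonneg t)
  have h2 : (0:ℝ) < ∏ j ∈ range (n + 1), (t + (j:ℝ)) := Pfun_pos ht n
  positivity

lemma exists_GammaSeq_bound {t : ℝ} (ht : 0 < t) : ∃ M : ℝ, ∀ n, Real.GammaSeq t n ≤ M := by
  obtain ⟨M, hM⟩ := (Real.GammaSeq_tendsto_Gamma t).bddAbove_range
  exact ⟨M, fun n => hM (Set.mem_range_self n)⟩

lemma summable_afun {t : ℝ} (ht : 0 < t) : Summable (afun t) := by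
  obtain ⟨M, hM⟩ := exists_GammaSeq_bound ht
  rw [← summable_nat_add_iff 1]
  have hsum : Summable (fun n : ℕ => M * (1 / ((n : ℝ) + 1) ^ (1 + t))) := by
    apply Summable.mul_left
    have h := Real.summable_one_div_nat_rpow.mpr (show (1:ℝ) < 1 + t by linarith)
    have := (summable_nat_add_iff 1).mpr h
    refine this.congr fun n => ?_
    push_cast
    ring_nf
  refine Summable.of_nonneg_of_le (fun n => ?_) (fun n => ?_) hsum
  · have := Pfun_pos ht (n + 1)
    unfold afun
    positivity
  · have hn1 : (0:ℝ) < (n:ℝ) + 1 := by positivity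
    have hpw : (0:ℝ) < ((n:ℝ) + 1) ^ t := Real.rpow_pos_of_pos hn1 t
    have hfd := factorial_div_Pfun ht (n := n + 1) (by omega)
    have hcast : (((n + 1 : ℕ)) : ℝ) = (n:ℝ) + 1 := by push_cast; ring
    rw [hcast] at hfd
    have key : afun t (n + 1) = Real.GammaSeq t (n + 1) / ((n:ℝ) + 1) ^ t / ((n:ℝ) + 1 + 1) := by
      unfold afun
      rw [div_mul_eq_div_div_swap, hfd, hcast]
    have hG := hM (n + 1)
    have hGn := GammaSeq_nonneg ht (n + 1)
    have hMn : 0 ≤ M := hGn.trans hG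
    have hrhs : M * (1 / ((n:ℝ) + 1) ^ (1 + t)) = M / ((n:ℝ) + 1) ^ t / ((n:ℝ) + 1) := by
      rw [Real.rpow_add hn1, Real.rpow_one, mul_one_div, div_div, mul_comm ((n:ℝ) + 1)]
    rw [key, hrhs]
    gcongr <;> linarith [hG, hMn]

noncomputable def bfun (t : ℝ) (n : ℕ) : ℝ := (n.factorial : ℝ) * t / Pfun t n

lemma bfun_zero {t : ℝ} (ht : 0 < t) : bfun t 0 = 1 := by
  unfold bfun Pfun
  simp [ht.ne']

lemma bfun_tendsto_zero {t : ℝ} (ht : 0 < t) : Tendsto (bfun t) atTop (𝓝 0) := by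
  have h1 : Tendsto (fun n : ℕ => t * Real.GammaSeq t n * ((n : ℝ) ^ t)⁻¹) atTop (𝓝 0) := by
    have ha : Tendsto (fun n : ℕ => t * Real.GammaSeq t n) atTop (𝓝 (t * Real.Gamma t)) :=
      (Real.GammaSeq_tendsto_Gamma t).const_mul t
    have hb : Tendsto (fun n : ℕ => ((n : ℝ) ^ t)⁻¹) atTop (𝓝 0) :=
      tendsto_inv_atTop_zero.comp ((tendsto_rpow_atTop ht).comp tendsto_natCast_atTop_atTop)
    simpa using ha.mul hb
  refine h1.congr' ?_
  filter_upwards [eventually_ge_atTop 1] with n hn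
  have hfd := factorial_div_Pfun ht hn
  have hn0 : (0 : ℝ) < n := by exact_mod_cast hn
  have hP := Pfun_pos ht n
  have hnt : (0 : ℝ) < (n : ℝ) ^ t := Real.rpow_pos_of_pos hn0 t
  unfold bfun
  rw [mul_comm ((n.factorial : ℝ)) t, mul_div_assoc, hfd]
  field_simp

lemma bfun_sub (t : ℝ) (ht : 0 < t) (n : ℕ) :
    bfun t n - bfun t (n + 1) = t ^ 2 * ((n.factorial : ℝ) / Pfun t (n + 1)) := by
  have hP := Pfun_pos ht n
  have hP1 := Pfun_pos ht (n + 1)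
  unfold bfun
  rw [Pfun_succ]
  have hfac : ((n + 1).factorial : ℝ) = ((n : ℝ) + 1) * n.factorial := by
    rw [Nat.factorial_succ]; push_cast; ring
  rw [hfac]
  field_simp
  ring

lemma hasSum_cfun {t : ℝ} (ht : 0 < t) :
    HasSum (fun n : ℕ => (n.factorial : ℝ) / Pfun t (n + 1)) (1 / t ^ 2) := by
  have hnn : ∀ n : ℕ, 0 ≤ (n.factorial : ℝ) / Pfun t (n + 1) := fun n =>
    le_of_lt (by have := Pfun_pos ht (n + 1); positivity)
  rw [hasSum_iff_tendsto_nat_of_nonneg hnn]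
  have key : ∀ N : ℕ, ∑ n ∈ range N, (n.factorial : ℝ) / Pfun t (n + 1)
      = (bfun t 0 - bfun t N) / t ^ 2 := by
    intro N
    rw [← Finset.sum_range_sub' (bfun t)]
    rw [Finset.sum_div]
    refine Finset.sum_congr rfl fun n _ => ?_
    rw [bfun_sub t ht n, mul_comm (t ^ 2) _, mul_div_assoc,
      div_self (pow_ne_zero 2 ht.ne'), mul_one]
  have h2 : Tendsto (fun N : ℕ => (bfun t 0 - bfun t N) / t ^ 2) atTop (𝓝 (1 / t ^ 2)) := by
    have h0 := ((tendsto_const_nhds (x := bfun t 0) (f := atTop (α := ℕ))).sub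
      (bfun_tendsto_zero ht)).div_const (t ^ 2)
    rw [sub_zero, bfun_zero ht] at h0
    exact h0.congr fun N => by rw [bfun_zero ht]
  exact h2.congr fun N => (key N).symm


lemma afun_sub {t : ℝ} (ht : 0 < t) (n : ℕ) :
    afun t n - afun (t + 1) n = (n.factorial : ℝ) / Pfun t (n + 1) := by
  have hP := Pfun_pos ht n
  have hP1 := Pfun_pos ht (n + 1)
  have hP2 := Pfun_pos (show (0:ℝ) < t + 1 by linarith) n
  have hP' : Pfun (t + 1) n = Pfun t (n + 1) / t := by
    rw [← Pfun_shift]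
    field_simp
  have hn1 : (0:ℝ) < (n:ℝ) + 1 := by positivity
  unfold afun
  rw [hP']
  rw [Pfun_succ] at *
  have htn1 : (0:ℝ) < t + (n:ℝ) + 1 := by positivity
  field_simp
  ring

lemma F_sub {t : ℝ} (ht : 0 < t) :
    (∑' n, afun t n) - (∑' n, afun (t + 1) n) = 1 / t ^ 2 := by
  rw [← Summable.tsum_sub (summable_afun ht) (summable_afun (by linarith)),
    tsum_congr (fun n => afun_sub ht n)]
  exact (hasSum_cfun ht).tsum_eq

lemma trig_sub {t : ℝ} (ht : 0 < t) :
    (∑' k : ℕ, 1 / (t + (k:ℝ)) ^ 2) - (∑' k : ℕ, 1 / ((t + 1) + (k:ℝ)) ^ 2) = 1 / t ^ 2 := by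
  rw [Summable.tsum_eq_zero_add (summable_inv_sq_add ht)]
  have h : ∀ k : ℕ, 1 / (t + ((k + 1 : ℕ):ℝ)) ^ 2 = 1 / ((t + 1) + (k:ℝ)) ^ 2 := by
    intro k; push_cast; ring_nf
  rw [tsum_congr h]
  norm_num

lemma telescope_hasSum {s : ℝ} (hs : 1 < s) :
    HasSum (fun k : ℕ => 1 / (s - 1 + (k:ℝ)) - 1 / (s + k)) (1 / (s - 1)) := by
  have hs0 : (0:ℝ) < s - 1 := by linarith
  have hnn : ∀ k : ℕ, 0 ≤ 1 / (s - 1 + (k:ℝ)) - 1 / (s + k) := by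
    intro k
    have h1 : (0:ℝ) < s - 1 + k := by positivity
    rw [sub_nonneg]
    exact one_div_le_one_div_of_le h1 (by linarith)
  rw [hasSum_iff_tendsto_nat_of_nonneg hnn]
  have key : ∀ N : ℕ, ∑ k ∈ range N, (1 / (s - 1 + (k:ℝ)) - 1 / (s + k))
      = 1 / (s - 1 + ((0:ℕ):ℝ)) - 1 / (s - 1 + (N:ℝ)) := by
    intro N
    rw [← Finset.sum_range_sub' (fun k : ℕ => 1 / (s - 1 + (k:ℝ))) N]
    refine Finset.sum_congr rfl fun k _ => ?_
    push_cast
    ring_nf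
  have hlim : Tendsto (fun N : ℕ => 1 / (s - 1 + ((0:ℕ):ℝ)) - 1 / (s - 1 + (N:ℝ))) atTop
      (𝓝 (1 / (s - 1))) := by
    have h2 : Tendsto (fun N : ℕ => 1 / (s - 1 + (N:ℝ))) atTop (𝓝 0) := by
      simp only [one_div]
      exact tendsto_inv_atTop_zero.comp
        (tendsto_atTop_add_const_left _ _ tendsto_natCast_atTop_atTop)
    have := (tendsto_const_nhds (x := 1 / (s - 1 + ((0:ℕ):ℝ))) (f := atTop (α := ℕ))).sub h2
    rw [sub_zero] at this
    norm_num at this ⊢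
    exact this
  exact hlim.congr fun N => (key N).symm

lemma trig_le {s : ℝ} (hs : 1 < s) :
    (∑' k : ℕ, 1 / (s + (k:ℝ)) ^ 2) ≤ 1 / (s - 1) := by
  have hts := telescope_hasSum hs
  rw [← hts.tsum_eq]
  refine Summable.tsum_le_tsum (fun k => ?_) (summable_inv_sq_add (by linarith)) hts.summable
  have h1 : (0:ℝ) < s - 1 + k := by have : (0:ℝ) ≤ k := Nat.cast_nonneg k; linarith
  have h2 : (0:ℝ) < s + k := by linarith
  have heq : 1 / (s - 1 + (k:ℝ)) - 1 / (s + k) = 1 / ((s - 1 + k) * (s + k)) := by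
    field_simp
    ring
  rw [heq]
  apply one_div_le_one_div_of_le (by positivity)
  nlinarith

lemma afun_le {s : ℝ} (hs : 1 ≤ s) (n : ℕ) :
    afun s n ≤ 1 / s * (1 / ((n:ℝ) + 1) ^ 2) := by
  have hs0 : (0:ℝ) < s := by linarith
  have hP : s * ((n + 1).factorial : ℝ) ≤ Pfun s n := by
    induction n with
    | zero => norm_num [Pfun]
    | succ n ih =>
      rw [Pfun_succ]
      have hfac : ((n + 2).factorial : ℝ) = ((n:ℝ) + 2) * ((n + 1).factorial : ℝ) := by
        rw [show n + 2 = (n + 1) + 1 from rfl, Nat.factorial_succ]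
        push_cast
        ring
      have hfp : (0:ℝ) < ((n + 1).factorial : ℝ) := by exact_mod_cast (n + 1).factorial_pos
      calc s * ((n + 1 + 1).factorial : ℝ) = s * ((n + 1).factorial : ℝ) * ((n:ℝ) + 2) := by
            rw [hfac]; ring
        _ ≤ Pfun s n * (s + (n:ℝ) + 1) := by
            apply mul_le_mul ih (by linarith) (by positivity)
            exact le_trans (by positivity) ih
  have hfac1 : ((n + 1).factorial : ℝ) = ((n:ℝ) + 1) * (n.factorial : ℝ) := by
    rw [Nat.factorial_succ]; push_cast; ring
  have hfp : (0:ℝ) < (n.factorial : ℝ) := by exact_mod_cast n.factorial_pos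
  have hn1 : (0:ℝ) < (n:ℝ) + 1 := by positivity
  have hPp := Pfun_pos hs0 n
  unfold afun
  rw [div_le_iff₀ (by positivity), mul_comm (1 / s)]
  rw [hfac1] at hP
  have h2 : (n.factorial : ℝ) * (s * ((n:ℝ) + 1) ^ 2) ≤ ((n:ℝ) + 1) * Pfun s n := by
    nlinarith
  calc (n.factorial : ℝ) = (n.factorial : ℝ) * (s * ((n:ℝ)+1)^2) * (1 / (s * ((n:ℝ)+1)^2)) := by
        field_simp
    _ ≤ ((n:ℝ) + 1) * Pfun s n * (1 / (s * ((n:ℝ)+1)^2)) := by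
        apply mul_le_mul_of_nonneg_right h2 (by positivity)
    _ = 1 / ((n:ℝ) + 1) ^ 2 * (1 / s) * (((n:ℝ) + 1) * Pfun s n) := by
        field_simp

lemma F_le {s : ℝ} (hs : 1 ≤ s) :
    (∑' n, afun s n) ≤ 1 / s * ∑' n : ℕ, 1 / ((n:ℝ) + 1) ^ 2 := by
  rw [← tsum_mul_left]
  exact Summable.tsum_le_tsum (afun_le hs) (summable_afun (by linarith))
    (summable_one_div_sq.mul_left _)

lemma trig_eq_F {t : ℝ} (ht : 0 < t) :
    (∑' k : ℕ, 1 / (t + (k:ℝ)) ^ 2) = ∑' n, afun t n := by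
  have hshift : ∀ N : ℕ, (∑' k : ℕ, 1 / (t + (k:ℝ)) ^ 2) - (∑' n, afun t n)
      = (∑' k : ℕ, 1 / ((t + N) + (k:ℝ)) ^ 2) - (∑' n, afun (t + N) n) := by
    intro N
    induction N with
    | zero => norm_num
    | succ N ih =>
      have htN : (0:ℝ) < t + N := by positivity
      have h1 := trig_sub htN
      have h2 := F_sub htN
      have hc : t + ((N + 1 : ℕ):ℝ) = (t + N) + 1 := by push_cast; ring
      rw [hc, ih]
      linarith
  have hA : Tendsto (fun N : ℕ => ∑' k : ℕ, 1 / ((t + N) + (k:ℝ)) ^ 2) atTop (𝓝 0) := by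
    have hup : Tendsto (fun N : ℕ => 1 / (t + N - 1)) atTop (𝓝 0) := by
      simp only [one_div]
      apply tendsto_inv_atTop_zero.comp
      apply tendsto_atTop_add_const_right
      exact tendsto_atTop_add_const_left _ _ tendsto_natCast_atTop_atTop
    refine tendsto_of_tendsto_of_tendsto_of_le_of_le' tendsto_const_nhds hup ?_ ?_
    · filter_upwards with N
      apply tsum_nonneg fun k => ?_
      have : (0:ℝ) < t + N + k := by positivity
      positivity
    · filter_upwards [eventually_ge_atTop 2] with N hN
      have hN2 : (1:ℝ) < t + N := by
        have : (2:ℝ) ≤ N := by exact_mod_cast hN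
        linarith
      exact trig_le hN2
  have hB : Tendsto (fun N : ℕ => ∑' n, afun (t + N) n) atTop (𝓝 0) := by
    have hup : Tendsto (fun N : ℕ => 1 / (t + N) * ∑' n : ℕ, 1 / ((n:ℝ) + 1) ^ 2) atTop
        (𝓝 0) := by
      have h1 : Tendsto (fun N : ℕ => 1 / (t + (N:ℝ))) atTop (𝓝 0) := by
        simp only [one_div]
        exact tendsto_inv_atTop_zero.comp
          (tendsto_atTop_add_const_left _ _ tendsto_natCast_atTop_atTop)
      have h2 := h1.mul_const (∑' n : ℕ, 1 / ((n:ℝ) + 1) ^ 2)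
      rw [zero_mul] at h2
      exact h2
    refine tendsto_of_tendsto_of_tendsto_of_le_of_le' tendsto_const_nhds hup ?_ ?_
    · filter_upwards with N
      apply tsum_nonneg fun n => ?_
      have htN : (0:ℝ) < t + N := by positivity
      have := Pfun_pos htN n
      unfold afun
      positivity
    · filter_upwards [eventually_ge_atTop 1] with N hN
      have hN1 : (1:ℝ) ≤ t + N := by
        have : (1:ℝ) ≤ N := by exact_mod_cast hN
        linarith
      exact F_le hN1
  have hconst : Tendsto (fun _ : ℕ => (∑' k : ℕ, 1 / (t + (k:ℝ)) ^ 2) - ∑' n, afun t n) atTop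
      (𝓝 ((∑' k : ℕ, 1 / (t + (k:ℝ)) ^ 2) - ∑' n, afun t n)) := tendsto_const_nhds
  have hvar : Tendsto (fun N : ℕ => (∑' k : ℕ, 1 / (t + (k:ℝ)) ^ 2) - ∑' n, afun t n) atTop
      (𝓝 0) := by
    have := hA.sub hB
    rw [sub_zero] at this
    exact this.congr fun N => (hshift N).symm
  have := tendsto_nhds_unique hconst hvar
  linarith

theorem stmt17 (t : ℝ) (ht : 0 < t) :
    deriv digamma t - 1 / t =
      ∑' n : ℕ+, ((n : ℕ).factorial : ℝ) /
        (((n : ℝ) + 1) * ∏ k ∈ Finset.range ((n : ℕ) + 1), (t + k)) := by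
  have hd := (hasDerivAt_digamma ht).deriv
  rw [hd, trig_eq_F ht, Summable.tsum_eq_zero_add (summable_afun ht)]
  have ha0 : afun t 0 = 1 / t := by
    unfold afun Pfun
    norm_num
  rw [ha0, add_sub_cancel_left,
    ← Equiv.pnatEquivNat.symm.tsum_eq (fun n : ℕ+ => ((n : ℕ).factorial : ℝ) /
        (((n : ℝ) + 1) * ∏ k ∈ Finset.range ((n : ℕ) + 1), (t + (k:ℝ))))]
  refine tsum_congr fun n => ?_
  unfold afun Pfun
  norm_num [Equiv.pnatEquivNat, Nat.succPNat]
end
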